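/- arXiv:2311.02137 — 8 statements merged into one kernel-verified Lean document; each statement's English description precedes it below -/
import Mathlib

section
/- Let p be a prime and G = (ℤ/pℤ) × (ℤ/pℤ). Then G has exactly p+1 subgroups of order p, say C_p⁰, C_p¹, …, C_pᵖ, and there is an isomorphism of ℚ[G]-modules ℚ[G/{e}] ⊕ ℚ[G/G]^{⊕p} ≅ ⊕_{i=0}^{p} ℚ[G/C_pⁱ]; that is, {e} + p·(C_p×C_p) − ∑_{i=0}^{p} C_pⁱ is a Brauer relation for C_p × C_p. -/
noncomputable section
open scoped Classical

namespace BrauerCpCp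

variable {p : ℕ} {G : Type} [Group G] [Fintype G]

lemma natcard_ne {α : Type*} [Finite α] (a : α) :
    Nat.card {x : α // x ≠ a} = Nat.card α - 1 := by
  have e : {x : α // x ≠ a} ≃ (({a}ᶜ : Set α)) := Equiv.subtypeEquivRight (by simp)
  rw [Nat.card_congr e, Nat.card_coe_set_eq, Set.compl_eq_univ_diff,
    Set.ncard_diff_singleton_of_mem (Set.mem_univ a), Set.ncard_univ]

omit [Fintype G] in
lemma orderOf_eq' (hp : p.Prime) (hpow : ∀ g : G, g ^ p = 1) {g : G} (hg : g ≠ 1) :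
    orderOf g = p := by
  have h := orderOf_dvd_of_pow_eq_one (hpow g)
  rcases (Nat.dvd_prime hp).1 h with h1 | h1
  · exact absurd (orderOf_eq_one_iff.1 h1) hg
  · exact h1

lemma zpowers_eq (hp : p.Prime) (hpow : ∀ g : G, g ^ p = 1) {g : G} (hg : g ≠ 1)
    {H : Subgroup G} (hH : Nat.card H = p) (hmem : g ∈ H) :
    Subgroup.zpowers g = H := by
  refine Subgroup.eq_of_le_of_card_ge ((Subgroup.zpowers_le).2 hmem) ?_
  rw [hH, Nat.card_zpowers, orderOf_eq' hp hpow hg]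

/-- nonidentity elements are partitioned by the order-p subgroups -/
def sigmaEquiv (hp : p.Prime) (hpow : ∀ g : G, g ^ p = 1) :
    (Σ H : {H : Subgroup G // Nat.card H = p}, {h : H.1 // (h : G) ≠ 1}) ≃ {g : G // g ≠ 1} where
  toFun x := ⟨(x.2.1 : G), x.2.2⟩
  invFun g := ⟨⟨Subgroup.zpowers g.1, by rw [Nat.card_zpowers, orderOf_eq' hp hpow g.2]⟩,
    ⟨⟨g.1, Subgroup.mem_zpowers g.1⟩, g.2⟩⟩
  left_inv := by
    rintro ⟨⟨H, hH⟩, ⟨⟨h, hh⟩, hne⟩⟩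
    have : Subgroup.zpowers h = H := zpowers_eq hp hpow hne hH hh
    subst this
    rfl
  right_inv g := rfl

lemma card_subtype_ne_one {H : Subgroup G} (hH : Nat.card H = p) :
    Nat.card {h : H // (h : G) ≠ 1} = p - 1 := by
  have e : {h : H // (h : G) ≠ 1} ≃ {h : H // h ≠ 1} :=
    Equiv.subtypeEquivRight (fun h => by
      constructor
      · intro hne h1; exact hne (by rw [h1]; rfl)
      · intro hne h1; exact hne (Subtype.ext h1))
  rw [Nat.card_congr e, natcard_ne, hH]

lemma card_order_p (hp : p.Prime) (hcard : Nat.card G = p ^ 2)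
    (hpow : ∀ g : G, g ^ p = 1) :
    Nat.card {H : Subgroup G // Nat.card H = p} = p + 1 := by
  have key := Nat.card_congr (sigmaEquiv hp hpow (G := G))
  rw [natcard_ne, hcard] at key
  rw [Nat.card_eq_fintype_card, Fintype.card_sigma] at key
  have h3 : ∀ H : {H : Subgroup G // Nat.card H = p},
      Fintype.card {h : H.1 // (h : G) ≠ 1} = p - 1 := by
    intro H
    rw [← Nat.card_eq_fintype_card, card_subtype_ne_one H.2]
  rw [Finset.sum_congr rfl (fun H _ => h3 H), Finset.sum_const, smul_eq_mul,
    Finset.card_univ] at key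
  have h4 : (p + 1) * (p - 1) = p ^ 2 - 1 := by
    have := hp.two_le
    obtain ⟨k, rfl⟩ : ∃ k, p = k + 1 := ⟨p - 1, by omega⟩
    have h5 : (k + 1 + 1) * k + 1 = (k + 1) ^ 2 := by ring
    simpa using by omega
  rw [← h4] at key
  rw [Nat.card_eq_fintype_card]
  have := hp.two_le
  exact Nat.eq_of_mul_eq_mul_right (by omega) key

lemma filter_mem_eq (hp : p.Prime) (hpow : ∀ g : G, g ^ p = 1) {g : G} (hg : g ≠ 1) :
    (Finset.univ.filter fun H : {H : Subgroup G // Nat.card H = p} => g ∈ H.1)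
      = {⟨Subgroup.zpowers g, by rw [Nat.card_zpowers, orderOf_eq' hp hpow hg]⟩} := by
  ext H
  simp only [Finset.mem_filter, Finset.mem_univ, true_and, Finset.mem_singleton]
  constructor
  · intro hmem; exact Subtype.ext ((zpowers_eq hp hpow hg H.2 hmem).symm)
  · rintro rfl; exact Subgroup.mem_zpowers g

/-- summing a function over all order-`p` subgroups counts `1` with multiplicity `p+1`
and everything else once. -/
lemma key_sum (hp : p.Prime) (hcard : Nat.card G = p ^ 2) (hpow : ∀ g : G, g ^ p = 1)
    (φ : G → ℚ) :
    ∑ H : {H : Subgroup G // Nat.card H = p}, ∑ h : G, (if h ∈ H.1 then φ h else 0)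
      = p * φ 1 + ∑ g : G, φ g := by
  rw [Finset.sum_comm]
  have hterm : ∀ g : G,
      (∑ H : {H : Subgroup G // Nat.card H = p}, if g ∈ H.1 then φ g else 0)
        = φ g + (if g = 1 then (p : ℚ) * φ g else 0) := by
    intro g
    rw [← Finset.sum_filter]
    rw [Finset.sum_const]
    by_cases hg : g = 1
    · subst hg
      rw [if_pos rfl]
      rw [Finset.filter_true_of_mem (fun H _ => H.1.one_mem), Finset.card_univ,
        ← Nat.card_eq_fintype_card, card_order_p hp hcard hpow, nsmul_eq_mul]
      push_cast
      ring
    · rw [if_neg hg, filter_mem_eq hp hpow hg, Finset.card_singleton, one_smul, add_zero]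
  rw [Finset.sum_congr rfl (fun g _ => hterm g), Finset.sum_add_distrib,
    Finset.sum_ite_eq' Finset.univ (1 : G) (fun g => (p : ℚ) * φ g), if_pos (Finset.mem_univ 1)]
  ring

/- ============ the linear maps ============ -/

variable (G)

omit [Fintype G]

/-- the natural projection `G ⧸ ⊥ → G ⧸ H` -/
def qm (H : Subgroup G) : G ⧸ (⊥ : Subgroup G) → G ⧸ H :=
  Quotient.map' id (fun a b hab => by
    rw [QuotientGroup.leftRel_apply] at hab ⊢
    rw [Subgroup.mem_bot] at hab
    simp only [id]
    rw [hab]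
    exact H.one_mem)

lemma qm_mk (H : Subgroup G) (b : G) :
    qm G H (QuotientGroup.mk b) = QuotientGroup.mk b := rfl

lemma mk_bot_bijective :
    Function.Bijective (QuotientGroup.mk : G → G ⧸ (⊥ : Subgroup G)) := by
  constructor
  · intro a b hab
    rw [QuotientGroup.eq, Subgroup.mem_bot] at hab
    rw [← mul_one a, ← hab, ← mul_assoc, mul_inv_cancel, one_mul]
  · exact Quotient.mk''_surjective

lemma qm_smul (H : Subgroup G) (g : G) (x : G ⧸ (⊥ : Subgroup G)) :
    qm G H (g • x) = g • qm G H x := by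
  obtain ⟨b, rfl⟩ := (mk_bot_bijective G).2 x
  rfl

/-- the projection as a linear map on rational vector spaces -/
def piH (H : Subgroup G) : ((G ⧸ (⊥ : Subgroup G)) →₀ ℚ) →ₗ[ℚ] ((G ⧸ H) →₀ ℚ) :=
  Finsupp.lmapDomain ℚ ℚ (qm G H)

omit [Fintype G] in
lemma piH_comm (H : Subgroup G) (g : G) (f : (G ⧸ (⊥ : Subgroup G)) →₀ ℚ) :
    piH G H (Representation.ofMulAction ℚ G (G ⧸ (⊥ : Subgroup G)) g (MonoidAlgebra.ofCoeff f)).coeff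
      = (Representation.ofMulAction ℚ G (G ⧸ H) g (MonoidAlgebra.ofCoeff (piH G H f))).coeff := by
  show Finsupp.mapDomain _ (Finsupp.mapDomain _ f) = Finsupp.mapDomain _ (Finsupp.mapDomain _ f)
  rw [← Finsupp.mapDomain_comp, ← Finsupp.mapDomain_comp]
  congr 1
  funext a
  exact qm_smul G H g a

variable [Fintype G]

/-- the sum of all basis vectors (the norm element) -/
def NN (H : Subgroup G) : (G ⧸ H) →₀ ℚ :=
  ∑ x : G ⧸ H, Finsupp.single x 1

/-- the inclusion of the trivial representation `ℚ[G/G]` into `ℚ[G/H]` -/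
def qH (H : Subgroup G) : ((G ⧸ (⊤ : Subgroup G)) →₀ ℚ) →ₗ[ℚ] ((G ⧸ H) →₀ ℚ) :=
  (Finsupp.lapply (1 : G ⧸ (⊤ : Subgroup G))).smulRight (NN G H)

variable (p) in
/-- the big map realizing the Brauer relation -/
def bigMap (σ : {H : Subgroup G // Nat.card H = p} ≃ Fin (p + 1)) :
    (((G ⧸ (⊥ : Subgroup G)) →₀ ℚ) × (Fin p → ((G ⧸ (⊤ : Subgroup G)) →₀ ℚ))) →ₗ[ℚ]
      (∀ H : {H : Subgroup G // Nat.card H = p}, (G ⧸ H.1) →₀ ℚ) :=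
  LinearMap.pi fun H =>
    ((piH G H.1).comp (LinearMap.fst ℚ _ _)) +
    ((Fin.cases (motive := fun _ => (Fin p → ((G ⧸ (⊤ : Subgroup G)) →₀ ℚ)) →ₗ[ℚ]
        ((G ⧸ H.1) →₀ ℚ)) 0 (fun i => (qH G H.1).comp (LinearMap.proj i)) (σ H)).comp
      (LinearMap.snd ℚ _ _))

omit [Fintype G] in
lemma rho_top (g : G) (c : (G ⧸ (⊤ : Subgroup G)) →₀ ℚ) :
    (Representation.ofMulAction ℚ G (G ⧸ (⊤ : Subgroup G)) g (MonoidAlgebra.ofCoeff c)).coeff = c := by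
  haveI := QuotientGroup.subsingleton_quotient_top (G := G)
  show Finsupp.mapDomain _ c = c
  have h : (fun x : G ⧸ (⊤ : Subgroup G) => g • x) = id := funext fun x => Subsingleton.elim _ _
  rw [h, Finsupp.mapDomain_id]

lemma NN_inv (H : Subgroup G) (g : G) :
    (Representation.ofMulAction ℚ G (G ⧸ H) g (MonoidAlgebra.ofCoeff (NN G H))).coeff = NN G H := by
  show Finsupp.mapDomain _ (NN G H) = NN G H
  rw [NN, Finsupp.mapDomain_finsetSum]
  refine Fintype.sum_bijective (g • ·) (MulAction.bijective g) _ _ (fun x => ?_)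
  rw [Finsupp.mapDomain_single]

lemma qH_comm (H : Subgroup G) (g : G) (c : (G ⧸ (⊤ : Subgroup G)) →₀ ℚ) :
    qH G H (Representation.ofMulAction ℚ G (G ⧸ (⊤ : Subgroup G)) g (MonoidAlgebra.ofCoeff c)).coeff
      = (Representation.ofMulAction ℚ G (G ⧸ H) g (MonoidAlgebra.ofCoeff (qH G H c))).coeff := by
  rw [rho_top]
  show c 1 • NN G H = (Representation.ofMulAction ℚ G (G ⧸ H) g (MonoidAlgebra.ofCoeff (c 1 • NN G H))).coeff
  rw [MonoidAlgebra.ofCoeff_smul, map_smul, MonoidAlgebra.coeff_smul, NN_inv]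

lemma NN_apply (H : Subgroup G) (y : G ⧸ H) : NN G H y = 1 := by
  rw [NN, Finsupp.finset_sum_apply]
  simp [Finsupp.single_apply]

lemma qH_apply (H : Subgroup G) (c : (G ⧸ (⊤ : Subgroup G)) →₀ ℚ) (y : G ⧸ H) :
    qH G H c y = c 1 := by
  show (c 1 • NN G H) y = c 1
  rw [Finsupp.smul_apply, NN_apply, smul_eq_mul, mul_one]

lemma mapDomain_apply' {α β : Type*} [Fintype α] (m : α → β) (f : α →₀ ℚ) (y : β) :
    Finsupp.mapDomain m f y = ∑ a : α, if m a = y then f a else 0 := by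
  rw [Finsupp.mapDomain, Finsupp.sum_apply, Finsupp.sum]
  rw [Finset.sum_subset (Finset.subset_univ f.support)]
  · exact Finset.sum_congr rfl fun a _ => Finsupp.single_apply
  · intro x _ hx
    rw [Finsupp.notMem_support_iff.mp hx, Finsupp.single_zero, Finsupp.coe_zero, Pi.zero_apply]

lemma piH_apply (H : Subgroup G) (f : (G ⧸ (⊥ : Subgroup G)) →₀ ℚ) (x : G) :
    piH G H f (QuotientGroup.mk x)
      = ∑ h : G, if h ∈ H then f (QuotientGroup.mk (x * h)) else 0 := by
  show Finsupp.mapDomain _ f _ = _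
  rw [mapDomain_apply']
  refine (Fintype.sum_bijective
    (fun h : G => (QuotientGroup.mk (x * h) : G ⧸ (⊥ : Subgroup G)))
    ((mk_bot_bijective G).comp (Group.mulLeft_bijective x))
    _ _ (fun h => ?_)).symm
  have hiff : ((QuotientGroup.mk (x * h) : G ⧸ H) = QuotientGroup.mk x) ↔ h ∈ H := by
    rw [QuotientGroup.eq]
    simp [mul_assoc]
  simp only [qm_mk, hiff]



lemma kappa_apply (H : Subgroup G) (hH : Nat.card H = p)
    (σ : {H : Subgroup G // Nat.card H = p} ≃ Fin (p + 1))
    (c : Fin p → ((G ⧸ (⊤ : Subgroup G)) →₀ ℚ)) (y : G ⧸ H) :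
    (Fin.cases (motive := fun _ => (Fin p → ((G ⧸ (⊤ : Subgroup G)) →₀ ℚ)) →ₗ[ℚ]
        ((G ⧸ H) →₀ ℚ)) 0 (fun i => (qH G H).comp (LinearMap.proj i)) (σ ⟨H, hH⟩) : _) c y
      = Fin.cases (motive := fun _ => ℚ) 0 (fun i => c i 1) (σ ⟨H, hH⟩) := by
  rcases Fin.eq_zero_or_eq_succ (σ ⟨H, hH⟩) with h0 | ⟨i, hi⟩
  · rw [h0, Fin.cases_zero, Fin.cases_zero, LinearMap.zero_apply, Finsupp.coe_zero, Pi.zero_apply]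
  · rw [hi, Fin.cases_succ, Fin.cases_succ, LinearMap.comp_apply, LinearMap.proj_apply,
      qH_apply]

variable (p) in
lemma bigMap_apply (σ : {H : Subgroup G // Nat.card H = p} ≃ Fin (p + 1))
    (v : ((G ⧸ (⊥ : Subgroup G)) →₀ ℚ) × (Fin p → ((G ⧸ (⊤ : Subgroup G)) →₀ ℚ)))
    (H : {H : Subgroup G // Nat.card H = p}) :
    bigMap p G σ v H = piH G H.1 v.1 +
      (Fin.cases (motive := fun _ => (Fin p → ((G ⧸ (⊤ : Subgroup G)) →₀ ℚ)) →ₗ[ℚ]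
        ((G ⧸ H.1) →₀ ℚ)) 0 (fun i => (qH G H.1).comp (LinearMap.proj i)) (σ H) : _) v.2 := rfl

variable (p) in
lemma bigMap_injective (hp : p.Prime) (hcard : Nat.card G = p ^ 2)
    (hpow : ∀ g : G, g ^ p = 1) (σ : {H : Subgroup G // Nat.card H = p} ≃ Fin (p + 1)) :
    Function.Injective (bigMap p G σ) := by
  rw [← LinearMap.ker_eq_bot, LinearMap.ker_eq_bot']
  rintro ⟨f, c⟩ hv
  have hA : ∀ (H : {H : Subgroup G // Nat.card H = p}) (x : G),
      (∑ h : G, if h ∈ H.1 then f (QuotientGroup.mk (x * h)) else 0)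
        + Fin.cases (motive := fun _ => ℚ) 0 (fun i => c i 1) (σ H) = 0 := by
    intro H x
    have h1 : bigMap p G σ (f, c) H = 0 := by rw [hv]; rfl
    have h2 := DFunLike.congr_fun h1 (QuotientGroup.mk x : G ⧸ H.1)
    rw [bigMap_apply, Finsupp.add_apply, piH_apply, kappa_apply G H.1 H.2 σ] at h2
    simpa using h2
  have hB : ∀ x : G, ((p : ℚ) * f (QuotientGroup.mk x) + ∑ g : G, f (QuotientGroup.mk g))
      + ∑ H : {H : Subgroup G // Nat.card H = p},
          Fin.cases (motive := fun _ => ℚ) 0 (fun i => c i 1) (σ H) = 0 := by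
    intro x
    have h2 : ∑ H : {H : Subgroup G // Nat.card H = p},
        ((∑ h : G, if h ∈ H.1 then f (QuotientGroup.mk (x * h)) else 0)
          + Fin.cases (motive := fun _ => ℚ) 0 (fun i => c i 1) (σ H)) = 0 := by
      rw [Finset.sum_congr rfl (fun H _ => hA H x), Finset.sum_const_zero]
    rw [Finset.sum_add_distrib, key_sum hp hcard hpow] at h2
    rw [mul_one] at h2
    rwa [Fintype.sum_bijective (x * ·) (Group.mulLeft_bijective x)
      (fun g => f (QuotientGroup.mk (x * g))) (fun g => f (QuotientGroup.mk g))
      (fun g => rfl)] at h2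
  have hconst : ∀ x : G, f (QuotientGroup.mk x) = f (QuotientGroup.mk (1 : G)) := by
    intro x
    have hx := hB x
    have h1 := hB 1
    have hpq : (p : ℚ) ≠ 0 := Nat.cast_ne_zero.2 hp.ne_zero
    have h2 : (p : ℚ) * f (QuotientGroup.mk x) = (p : ℚ) * f (QuotientGroup.mk (1 : G)) := by
      linarith [hx, h1]
    exact mul_left_cancel₀ hpq h2
  have hF1 : f (QuotientGroup.mk (1 : G)) = 0 := by
    have h0 := hA (σ.symm 0) 1
    rw [Equiv.apply_symm_apply, Fin.cases_zero, add_zero] at h0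
    have hrw : ∀ h : G,
        (if h ∈ (σ.symm (0 : Fin (p+1))).1 then f (QuotientGroup.mk ((1 : G) * h)) else 0)
          = (if h ∈ (σ.symm (0 : Fin (p+1))).1 then f (QuotientGroup.mk (1 : G)) else 0) := by
      intro h
      rw [hconst (1 * h)]
    rw [Finset.sum_congr rfl (fun h _ => hrw h), ← Finset.sum_filter, Finset.sum_const] at h0
    have hcardH : (Finset.univ.filter (· ∈ (σ.symm (0 : Fin (p+1))).1)).card = p := by
      rw [← Fintype.card_subtype, ← Nat.card_eq_fintype_card]
      exact (σ.symm 0).2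
    rw [hcardH, nsmul_eq_mul] at h0
    have hpq : (p : ℚ) ≠ 0 := Nat.cast_ne_zero.2 hp.ne_zero
    exact (mul_eq_zero.1 h0).resolve_left hpq
  have hF : ∀ x : G, f (QuotientGroup.mk x) = 0 := fun x => (hconst x).trans hF1
  have hf : f = 0 := by
    ext a
    obtain ⟨b, rfl⟩ := (mk_bot_bijective G).2 a
    rw [hF b]; rfl
  have hci : ∀ i : Fin p, c i = 0 := by
    intro i
    have h := hA (σ.symm (Fin.succ i)) 1
    rw [Equiv.apply_symm_apply, Fin.cases_succ] at h
    have hz : ∀ h : G, (if h ∈ (σ.symm (Fin.succ i)).1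
        then f (QuotientGroup.mk ((1 : G) * h)) else 0) = 0 := by
      intro h
      rw [hF (1 * h), ite_self]
    rw [Finset.sum_congr rfl (fun h _ => hz h), Finset.sum_const_zero, zero_add] at h
    have hc1 : c i = 0 := by
      ext y
      haveI := QuotientGroup.subsingleton_quotient_top (G := G)
      have hy : y = 1 := Subsingleton.elim _ _
      rw [hy, h]
      rfl
    exact hc1
  exact Prod.ext_iff.2 ⟨hf, funext hci⟩

variable (p) in
lemma dims (hp : p.Prime) (hcard : Nat.card G = p ^ 2) (hpow : ∀ g : G, g ^ p = 1) :
    Module.finrank ℚ (((G ⧸ (⊥ : Subgroup G)) →₀ ℚ) × (Fin p → ((G ⧸ (⊤ : Subgroup G)) →₀ ℚ)))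
      = Module.finrank ℚ (∀ H : {H : Subgroup G // Nat.card H = p}, (G ⧸ H.1) →₀ ℚ) := by
  have h2 : ∀ H : {H : Subgroup G // Nat.card H = p},
      Module.finrank ℚ ((G ⧸ H.1) →₀ ℚ) = p := by
    intro H
    haveI : Fintype (G ⧸ H.1) := Fintype.ofFinite _
    rw [Module.finrank_finsupp_self, ← Nat.card_eq_fintype_card]
    have hl := Subgroup.card_eq_card_quotient_mul_card_subgroup H.1
    rw [hcard, H.2] at hl
    exact Nat.eq_of_mul_eq_mul_right hp.pos (hl.symm.trans (pow_two p))
  have h3 : Module.finrank ℚ ((G ⧸ (⊤ : Subgroup G)) →₀ ℚ) = 1 := by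
    haveI := QuotientGroup.subsingleton_quotient_top (G := G)
    haveI : Unique (G ⧸ (⊤ : Subgroup G)) := uniqueOfSubsingleton (1 : G ⧸ (⊤ : Subgroup G))
    haveI : Fintype (G ⧸ (⊤ : Subgroup G)) := Fintype.ofFinite _
    rw [Module.finrank_finsupp_self, Fintype.card_unique]
  have h1 : Module.finrank ℚ ((G ⧸ (⊥ : Subgroup G)) →₀ ℚ) = p ^ 2 := by
    haveI : Fintype (G ⧸ (⊥ : Subgroup G)) := Fintype.ofFinite _
    rw [Module.finrank_finsupp_self, ← Nat.card_eq_fintype_card,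
      Nat.card_congr ((Equiv.ofBijective _ (mk_bot_bijective G)).symm), hcard]
  rw [Module.finrank_prod, Module.finrank_pi_fintype, Module.finrank_pi_fintype, h1]
  rw [Finset.sum_congr rfl (fun H _ => h2 H), Finset.sum_congr rfl (fun (i : Fin p) _ => h3),
    Finset.sum_const, Finset.sum_const, Finset.card_univ, Finset.card_univ, Fintype.card_fin,
    ← Nat.card_eq_fintype_card, card_order_p hp hcard hpow, smul_eq_mul, smul_eq_mul]
  ring

end BrauerCpCp

open BrauerCpCp in
/-- For `G = C_p × C_p`: `G` has exactly `p+1` subgroups of order `p`, and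
`{e} + p·G − ∑_{i=0}^{p} C_pⁱ` is a Brauer relation, i.e. there is an isomorphism of
`ℚ[G]`-modules `ℚ[G/{e}] ⊕ ℚ[G/G]^{⊕p} ≅ ⊕_{i} ℚ[G/C_pⁱ]`, the sum on the right being over
all subgroups of order `p`. -/
theorem brauer_relation_cp_times_cp (p : ℕ) (hp : p.Prime)
    (G : Type) [Group G] [Fintype G]
    (hG : Nonempty (G ≃* Multiplicative (ZMod p × ZMod p))) :
    Nat.card {H : Subgroup G // Nat.card H = p} = p + 1 ∧
    ∃ e : (((G ⧸ (⊥ : Subgroup G)) →₀ ℚ) × (Fin p → ((G ⧸ (⊤ : Subgroup G)) →₀ ℚ))) ≃ₗ[ℚ]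
          (∀ H : {H : Subgroup G // Nat.card H = p}, (G ⧸ H.1) →₀ ℚ),
      ∀ (g : G) (v : ((G ⧸ (⊥ : Subgroup G)) →₀ ℚ) × (Fin p → ((G ⧸ (⊤ : Subgroup G)) →₀ ℚ))),
        e ((Representation.ofMulAction ℚ G (G ⧸ (⊥ : Subgroup G)) g (MonoidAlgebra.ofCoeff v.1)).coeff,
           fun i => (Representation.ofMulAction ℚ G (G ⧸ (⊤ : Subgroup G)) g (MonoidAlgebra.ofCoeff (v.2 i))).coeff)
        = fun H => (Representation.ofMulAction ℚ G (G ⧸ H.1) g (MonoidAlgebra.ofCoeff (e v H))).coeff := by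
  obtain ⟨φ⟩ := hG
  have hcard : Nat.card G = p ^ 2 := by
    rw [Nat.card_congr φ.toEquiv]
    show Nat.card (ZMod p × ZMod p) = p ^ 2
    rw [Nat.card_prod, Nat.card_zmod, pow_two]
  have hpow : ∀ g : G, g ^ p = 1 := by
    intro g
    apply φ.injective
    rw [map_pow, map_one]
    have hz : ∀ x : ZMod p, p • x = 0 := fun x => by
      rw [nsmul_eq_mul, ZMod.natCast_self, zero_mul]
    apply Multiplicative.toAdd.injective
    rw [toAdd_pow, toAdd_one]
    exact Prod.ext_iff.2 ⟨by simpa using hz _, by simpa using hz _⟩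
  have hcount := card_order_p hp hcard hpow
  refine ⟨hcount, ?_⟩
  let σ : {H : Subgroup G // Nat.card H = p} ≃ Fin (p + 1) :=
    Fintype.equivFinOfCardEq (by rw [← Nat.card_eq_fintype_card, hcount])
  have hinj := bigMap_injective p G hp hcard hpow σ
  have hdim := dims p G hp hcard hpow
  refine ⟨LinearMap.linearEquivOfInjective _ hinj hdim, ?_⟩
  intro g v
  show bigMap p G σ ((Representation.ofMulAction ℚ G (G ⧸ (⊥ : Subgroup G)) g (MonoidAlgebra.ofCoeff v.1)).coeff,
      fun i => (Representation.ofMulAction ℚ G (G ⧸ (⊤ : Subgroup G)) g (MonoidAlgebra.ofCoeff (v.2 i))).coeff)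
    = fun H => (Representation.ofMulAction ℚ G (G ⧸ H.1) g (MonoidAlgebra.ofCoeff (bigMap p G σ v H))).coeff
  funext H
  rw [bigMap_apply, bigMap_apply, MonoidAlgebra.ofCoeff_add, map_add, MonoidAlgebra.coeff_add, piH_comm]
  congr 1
  rcases Fin.eq_zero_or_eq_succ (σ H) with h0 | ⟨i, hi⟩
  · simp only [h0, Fin.cases_zero, LinearMap.zero_apply, MonoidAlgebra.ofCoeff_zero, map_zero,
      MonoidAlgebra.coeff_zero]
  · simp only [hi, Fin.cases_succ, LinearMap.comp_apply, LinearMap.proj_apply]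
    exact qH_comm G H.1 g (v.2 i)
end
end

section
/- Let p be an odd prime and let G = D_{2p} = ⟨r, s | rᵖ = s² = e, s r s = r⁻¹⟩ be the dihedral group of order 2p. Then there is an isomorphism of ℚ[G]-modules ℚ[G/{e}] ⊕ ℚ[G/G]^{⊕2} ≅ ℚ[G/⟨s⟩]^{⊕2} ⊕ ℚ[G/⟨r⟩]; that is, {e} + 2·D_{2p} − 2·C₂ − C_p is a Brauer relation for D_{2p}. -/
namespace BrauerAux

open DihedralGroup Finsupp Representation

variable {p : ℕ}

/-- coset invariant for `G ⧸ ⟨sr 0⟩`. -/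
def fH : DihedralGroup p → ZMod p
  | r i => i
  | sr i => -i

/-- coset invariant for `G ⧸ ⟨r 1⟩`. -/
def fR : DihedralGroup p → Bool
  | r _ => false
  | sr _ => true

@[simp] lemma fH_r (i : ZMod p) : fH (r i) = i := rfl
@[simp] lemma fH_sr (i : ZMod p) : fH (sr i) = -i := rfl
@[simp] lemma fR_r (i : ZMod p) : fR (r i) = false := rfl
@[simp] lemma fR_sr (i : ZMod p) : fR (sr i) = true := rfl

@[simp] lemma inv_r (i : ZMod p) : (r i : DihedralGroup p)⁻¹ = r (-i) :=
  inv_eq_of_mul_eq_one_right (by rw [r_mul_r, add_neg_cancel, one_def])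

@[simp] lemma inv_sr (i : ZMod p) : (sr i : DihedralGroup p)⁻¹ = sr i :=
  inv_eq_of_mul_eq_one_right (sr_mul_self i)

lemma mem_zpowers_sr0 {g : DihedralGroup p} (h : g ∈ Subgroup.zpowers (sr 0)) :
    g = 1 ∨ g = sr 0 := by
  obtain ⟨k, rfl⟩ := Subgroup.mem_zpowers_iff.mp h
  have hsq : (sr (0 : ZMod p)) ^ (2 : ℤ) = 1 := by
    rw [zpow_two, sr_mul_self]
  rcases Int.even_or_odd k with ⟨m, rfl⟩ | ⟨m, rfl⟩
  · left
    rw [show m + m = 2 * m by ring, zpow_mul, hsq, one_zpow]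
  · right
    rw [show 2 * m + 1 = 2 * m + 1 from rfl, zpow_add, zpow_mul, hsq, one_zpow, one_mul, zpow_one]

lemma r_one_zpow (k : ℤ) : (r 1 : DihedralGroup p) ^ k = r (k : ZMod p) := by
  cases k with
  | ofNat n => rw [Int.ofNat_eq_coe, zpow_natCast, r_one_pow]; norm_num
  | negSucc n =>
    rw [zpow_negSucc, r_one_pow, inv_r]
    congr 1
    push_cast [Int.negSucc_eq]
    ring

lemma mem_zpowers_r1 {g : DihedralGroup p} (h : g ∈ Subgroup.zpowers (r 1)) :
    ∃ j : ZMod p, g = r j := by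
  obtain ⟨k, rfl⟩ := Subgroup.mem_zpowers_iff.mp h
  exact ⟨k, by rw [r_one_zpow]⟩

lemma r_mem_zpowers_r1 (j : ZMod p) [NeZero p] :
    (r j : DihedralGroup p) ∈ Subgroup.zpowers (r 1) :=
  Subgroup.mem_zpowers_iff.mpr ⟨(j.val : ℤ), by
    rw [r_one_zpow]; congr 1; push_cast; exact ZMod.natCast_rightInverse j⟩

/-- `G ⧸ ⊥ ≃ G`. -/
def eqB : (DihedralGroup p ⧸ (⊥ : Subgroup (DihedralGroup p))) ≃ DihedralGroup p where
  toFun := Quotient.lift id (fun a b hab => by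
    have h : a⁻¹ * b ∈ (⊥ : Subgroup (DihedralGroup p)) :=
      (QuotientGroup.leftRel_apply).mp hab
    rw [Subgroup.mem_bot] at h
    simpa [eq_comm] using (mul_eq_one_iff_inv_eq.mp h))
  invFun := QuotientGroup.mk
  left_inv := by intro q; induction q using Quotient.ind; rfl
  right_inv := fun g => rfl

/-- `G ⧸ ⟨sr 0⟩ ≃ ZMod p`. -/
def eqH : (DihedralGroup p ⧸ Subgroup.zpowers (sr (0 : ZMod p))) ≃ ZMod p where
  toFun := Quotient.lift fH (fun a b hab => by
    have h : a⁻¹ * b ∈ Subgroup.zpowers (sr (0 : ZMod p)) :=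
      (QuotientGroup.leftRel_apply).mp hab
    rcases mem_zpowers_sr0 h with h | h
    · have hb : b = a := by
        have := congrArg (a * ·) h
        simpa [mul_assoc] using this
      rw [hb]
    · have hb : b = a * sr 0 := by
        have := congrArg (a * ·) h
        simpa [mul_assoc] using this
      subst hb
      cases a <;> simp [fH]
    )
  invFun := fun i => QuotientGroup.mk (r i)
  left_inv := by
    intro q
    induction q using Quotient.ind with
    | _ g =>
      cases g with
      | r i => rfl
      | sr i =>
        show ((r (-i) : DihedralGroup p) : DihedralGroup p ⧸ Subgroup.zpowers (sr (0 : ZMod p)))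
            = ((sr i : DihedralGroup p) : DihedralGroup p ⧸ Subgroup.zpowers (sr (0 : ZMod p)))
        refine (QuotientGroup.eq).mpr ?_
        rw [inv_r, neg_neg, r_mul_sr, sub_self]
        exact Subgroup.mem_zpowers _
  right_inv := fun i => rfl

/-- representative map for `G ⧸ ⟨r 1⟩`. -/
def gR : Bool → DihedralGroup p
  | false => r 0
  | true => sr 0

/-- `G ⧸ ⟨r 1⟩ ≃ Bool`. -/
def eqR [NeZero p] : (DihedralGroup p ⧸ Subgroup.zpowers (r (1 : ZMod p))) ≃ Bool where
  toFun := Quotient.lift fR (fun a b hab => by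
    have h : a⁻¹ * b ∈ Subgroup.zpowers (r (1 : ZMod p)) :=
      (QuotientGroup.leftRel_apply).mp hab
    obtain ⟨j, hj⟩ := mem_zpowers_r1 h
    have hb : b = a * r j := by
      have := congrArg (a * ·) hj
      simpa [mul_assoc] using this
    subst hb
    cases a <;> simp [fR])
  invFun := fun b => QuotientGroup.mk (gR b)
  left_inv := by
    intro q
    induction q using Quotient.ind with
    | _ g =>
      cases g with
      | r i =>
        show ((r 0 : DihedralGroup p) : DihedralGroup p ⧸ Subgroup.zpowers (r (1 : ZMod p)))
            = ((r i : DihedralGroup p) : DihedralGroup p ⧸ Subgroup.zpowers (r (1 : ZMod p)))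
        refine (QuotientGroup.eq).mpr ?_
        rw [inv_r, neg_zero, r_mul_r, zero_add]
        exact r_mem_zpowers_r1 i
      | sr i =>
        show ((sr 0 : DihedralGroup p) : DihedralGroup p ⧸ Subgroup.zpowers (r (1 : ZMod p)))
            = ((sr i : DihedralGroup p) : DihedralGroup p ⧸ Subgroup.zpowers (r (1 : ZMod p)))
        refine (QuotientGroup.eq).mpr ?_
        rw [inv_sr, sr_mul_sr]
        exact r_mem_zpowers_r1 _
  right_inv := fun b => by cases b <;> rfl

lemma mkH (h : DihedralGroup p) :
    (h : DihedralGroup p ⧸ Subgroup.zpowers (sr (0 : ZMod p))) = (r (fH h) : DihedralGroup p) :=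
  (eqH.left_inv ⟦h⟧).symm

lemma mkR [NeZero p] (h : DihedralGroup p) :
    (h : DihedralGroup p ⧸ Subgroup.zpowers (r (1 : ZMod p))) = (gR (fR h) : DihedralGroup p) :=
  (eqR.left_inv ⟦h⟧).symm

/-- transport a permutation `Finsupp` module along an equivalence of the index set. -/
noncomputable def LQ {X I : Type*} [Finite I] (E : X ≃ I) : (X →₀ ℚ) ≃ₗ[ℚ] (I → ℚ) :=
  (Finsupp.domLCongr E).trans (Finsupp.linearEquivFunOnFinite ℚ ℚ I)

lemma LQ_apply {X I : Type*} [Finite I] (E : X ≃ I) (v : X →₀ ℚ) (i : I) :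
    LQ E v i = v (E.symm i) := by
  simp [LQ, Finsupp.linearEquivFunOnFinite]
  exact Finsupp.equivMapDomain_apply E v i

/-- model actions -/
def actB (g : DihedralGroup p) (x : DihedralGroup p → ℚ) : DihedralGroup p → ℚ :=
  fun h => x (g⁻¹ * h)

def actH [NeZero p] (g : DihedralGroup p) (y : ZMod p → ℚ) : ZMod p → ℚ :=
  fun i => y (fH (g⁻¹ * r i))

def actR (g : DihedralGroup p) (c : Bool → ℚ) : Bool → ℚ :=
  fun j => c (fR (g⁻¹ * gR j))

lemma LQB_act [NeZero p] (g : DihedralGroup p)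
    (v : (DihedralGroup p ⧸ (⊥ : Subgroup (DihedralGroup p))) →₀ ℚ) :
    LQ eqB (Representation.ofMulAction ℚ (DihedralGroup p)
      (DihedralGroup p ⧸ (⊥ : Subgroup (DihedralGroup p))) g (MonoidAlgebra.ofCoeff v)).coeff = actB g (LQ eqB v) := by
  funext h
  rw [LQ_apply, Representation.ofMulAction_apply, actB, LQ_apply]
  rfl

lemma LQH_act [NeZero p] (g : DihedralGroup p)
    (v : (DihedralGroup p ⧸ Subgroup.zpowers (sr (0 : ZMod p))) →₀ ℚ) :
    LQ eqH (Representation.ofMulAction ℚ (DihedralGroup p)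
      (DihedralGroup p ⧸ Subgroup.zpowers (sr (0 : ZMod p))) g (MonoidAlgebra.ofCoeff v)).coeff = actH g (LQ eqH v) := by
  funext i
  rw [LQ_apply, Representation.ofMulAction_apply, actH, LQ_apply]
  show v (g⁻¹ • ((r i : DihedralGroup p) : _ ⧸ _)) = v _
  rw [MulAction.Quotient.smul_mk]
  exact congrArg v (mkH _)

lemma LQR_act [NeZero p] (g : DihedralGroup p)
    (v : (DihedralGroup p ⧸ Subgroup.zpowers (r (1 : ZMod p))) →₀ ℚ) :
    LQ eqR (Representation.ofMulAction ℚ (DihedralGroup p)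
      (DihedralGroup p ⧸ Subgroup.zpowers (r (1 : ZMod p))) g (MonoidAlgebra.ofCoeff v)).coeff = actR g (LQ eqR v) := by
  funext j
  rw [LQ_apply, Representation.ofMulAction_apply, actR, LQ_apply]
  show v (g⁻¹ • ((gR j : DihedralGroup p) : _ ⧸ _)) = v _
  rw [MulAction.Quotient.smul_mk]
  exact congrArg v (mkR _)

lemma top_act (g : DihedralGroup p)
    (v : (DihedralGroup p ⧸ (⊤ : Subgroup (DihedralGroup p))) →₀ ℚ) :
    (Representation.ofMulAction ℚ (DihedralGroup p)
      (DihedralGroup p ⧸ (⊤ : Subgroup (DihedralGroup p))) g (MonoidAlgebra.ofCoeff v)).coeff = v := by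
  haveI := QuotientGroup.subsingleton_quotient_top (G := DihedralGroup p)
  ext q
  rw [Representation.ofMulAction_apply]
  exact congrArg v (Subsingleton.elim _ _)

variable (p) in
/-- The explicit model isomorphism. -/
noncomputable def Phi [NeZero p] :
    ((DihedralGroup p → ℚ) × ℚ × ℚ) →ₗ[ℚ] ((ZMod p → ℚ) × (ZMod p → ℚ) × (Bool → ℚ)) where
  toFun z :=
    (fun i => z.1 (r i) + z.1 (sr (-i)) + z.2.1,
     fun i => z.1 (r (i + 1)) + z.1 (sr (1 - i)) + z.2.2,
     fun j => if j then ∑ i : ZMod p, z.1 (sr i) else ∑ i : ZMod p, z.1 (r i))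
  map_add' z w := by
    refine Prod.ext ?_ (Prod.ext ?_ ?_)
    · funext i; simp; ring
    · funext i; simp; ring
    · funext i; cases i <;> simp [Finset.sum_add_distrib]
  map_smul' c z := by
    refine Prod.ext ?_ (Prod.ext ?_ ?_)
    · funext i; simp; ring
    · funext i; simp; ring
    · funext i; cases i <;> simp [Finset.mul_sum]

lemma Phi_equivariant [NeZero p] (g : DihedralGroup p) (x : DihedralGroup p → ℚ) (a b : ℚ) :
    Phi p (actB g x, a, b) =
      (actH g (Phi p (x, a, b)).1, actH g (Phi p (x, a, b)).2.1,
        actR g (Phi p (x, a, b)).2.2) := by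
  cases g with
  | r j =>
    refine Prod.ext ?_ (Prod.ext ?_ ?_) <;> funext i
    · show x ((r j)⁻¹ * r i) + x ((r j)⁻¹ * sr (-i)) + a = _
      simp only [actH, Phi, inv_r, r_mul_r, r_mul_sr, fH_r, LinearMap.coe_mk, AddHom.coe_mk]
      ring_nf
    · show x ((r j)⁻¹ * r (i + 1)) + x ((r j)⁻¹ * sr (1 - i)) + b = _
      simp only [actH, Phi, inv_r, r_mul_r, r_mul_sr, fH_r, LinearMap.coe_mk, AddHom.coe_mk]
      ring_nf
    · cases i with
      | false =>
        show (∑ i : ZMod p, x ((r j)⁻¹ * r i)) = _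
        simp only [actR, Phi, gR, inv_r, r_mul_r, fR_r, LinearMap.coe_mk, AddHom.coe_mk,
          if_false, Bool.false_eq_true]
        exact Fintype.sum_equiv (Equiv.addLeft (-j)) _ _ (fun i => rfl)
      | true =>
        show (∑ i : ZMod p, x ((r j)⁻¹ * sr i)) = _
        simp only [actR, Phi, gR, inv_r, r_mul_sr, fR_sr, LinearMap.coe_mk, AddHom.coe_mk,
          if_true]
        exact Fintype.sum_equiv (Equiv.subRight (-j)) _ _ (fun i => rfl)
  | sr j =>
    refine Prod.ext ?_ (Prod.ext ?_ ?_) <;> funext i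
    · show x ((sr j)⁻¹ * r i) + x ((sr j)⁻¹ * sr (-i)) + a = _
      simp only [actH, Phi, inv_sr, sr_mul_r, sr_mul_sr, fH_sr, LinearMap.coe_mk, AddHom.coe_mk]
      ring_nf
    · show x ((sr j)⁻¹ * r (i + 1)) + x ((sr j)⁻¹ * sr (1 - i)) + b = _
      simp only [actH, Phi, inv_sr, sr_mul_r, sr_mul_sr, fH_sr, LinearMap.coe_mk, AddHom.coe_mk]
      ring_nf
    · cases i with
      | false =>
        show (∑ i : ZMod p, x ((sr j)⁻¹ * r i)) = _
        simp only [actR, Phi, gR, inv_sr, sr_mul_r, fR_sr, LinearMap.coe_mk, AddHom.coe_mk,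
          if_true]
        exact Fintype.sum_equiv (Equiv.addLeft j) _ _ (fun i => rfl)
      | true =>
        show (∑ i : ZMod p, x ((sr j)⁻¹ * sr i)) = _
        simp only [actR, Phi, gR, inv_sr, sr_mul_sr, sub_zero, fR_r, LinearMap.coe_mk,
          AddHom.coe_mk, if_false, Bool.false_eq_true]
        exact Fintype.sum_equiv (Equiv.subRight j) _ _ (fun i => rfl)

lemma Phi_injective [NeZero p] (hp : p.Prime) (ho : Odd p) :
    Function.Injective (Phi p) := by
  haveI : Fact p.Prime := ⟨hp⟩
  refine (injective_iff_map_eq_zero (Phi p)).mpr ?_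
  rintro ⟨x, a, b⟩ h
  rw [Prod.ext_iff] at h
  obtain ⟨h1, h23⟩ := h
  rw [Prod.ext_iff] at h23
  obtain ⟨h2, h3⟩ := h23
  have e1 : ∀ i : ZMod p, x (r i) + x (sr (-i)) + a = 0 := fun i => by
    simpa [Phi] using congrFun h1 i
  have e2 : ∀ i : ZMod p, x (r (i + 1)) + x (sr (1 - i)) + b = 0 := fun i => by
    simpa [Phi] using congrFun h2 i
  have e3 : ∑ i : ZMod p, x (r i) = 0 := by simpa [Phi] using congrFun h3 false
  have e4 : ∑ i : ZMod p, x (sr i) = 0 := by simpa [Phi] using congrFun h3 true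
  have hw : ∀ j : ZMod p, x (sr j) = -a - x (r (-j)) := fun j => by
    have := e1 (-j); rw [neg_neg] at this; linarith
  have e2' : ∀ i : ZMod p, x (r (i + 1)) - x (r (i - 1)) = a - b := by
    intro i
    have h2i := e2 i
    have hwi := hw (1 - i)
    rw [neg_sub] at hwi
    linarith
  have hpQ : (p : ℚ) ≠ 0 := Nat.cast_ne_zero.mpr hp.ne_zero
  have hab : a = b := by
    have t1 : ∑ i : ZMod p, x (r (i + 1)) = ∑ i : ZMod p, x (r i) :=
      Fintype.sum_equiv (Equiv.addRight (1 : ZMod p)) _ _ (fun i => rfl)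
    have t2 : ∑ i : ZMod p, x (r (i - 1)) = ∑ i : ZMod p, x (r i) :=
      Fintype.sum_equiv (Equiv.subRight (1 : ZMod p)) _ _ (fun i => rfl)
    have hc : ∑ i : ZMod p, (x (r (i + 1)) - x (r (i - 1))) = (p : ℚ) * (a - b) := by
      rw [Finset.sum_congr rfl (fun i _ => e2' i), Finset.sum_const, Finset.card_univ,
        ZMod.card, nsmul_eq_mul]
    rw [Finset.sum_sub_distrib, t1, t2, sub_self] at hc
    have := (mul_eq_zero.mp hc.symm).resolve_left hpQ
    linarith
  have hstep : ∀ i : ZMod p, x (r (i + 2)) = x (r i) := by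
    intro i
    have h := e2' (i + 1)
    rw [hab, sub_self, sub_eq_zero] at h
    rw [show i + 1 + 1 = i + 2 from by ring, show i + 1 - 1 = i from by ring] at h
    exact h
  have heven : ∀ n : ℕ, ∀ i : ZMod p, x (r (i + 2 * (n : ZMod p))) = x (r i) := by
    intro n
    induction n with
    | zero => intro i; simp
    | succ n ih =>
      intro i
      have hcast : (i + 2 * ((n + 1 : ℕ) : ZMod p)) = (i + 2 * (n : ZMod p)) + 2 := by
        push_cast; ring
      rw [hcast, hstep, ih]
  have hconst : ∀ i : ZMod p, x (r i) = x (r 0) := by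
    intro i
    have h2u : (2 : ZMod p) ≠ 0 := by
      have hnd : ¬ (p ∣ 2) := by
        intro hd
        have := (Nat.prime_dvd_prime_iff_eq hp Nat.prime_two).mp hd
        rw [this] at ho
        exact (Nat.not_odd_iff_even.mpr even_two) ho
      have : ((2 : ℕ) : ZMod p) ≠ 0 := fun hz =>
        hnd ((ZMod.natCast_eq_zero_iff 2 p).mp hz)
      simpa using this
    set n : ℕ := (i * (2 : ZMod p)⁻¹).val with hn
    have hcast : ((n : ℕ) : ZMod p) = i * (2 : ZMod p)⁻¹ := ZMod.natCast_rightInverse _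
    have h2n : (2 : ZMod p) * ((n : ℕ) : ZMod p) = i := by
      rw [hcast]
      field_simp
    have h0 := heven n 0
    rw [zero_add, h2n] at h0
    exact h0
  have hr0 : x (r 0) = 0 := by
    have hs : ∑ i : ZMod p, x (r i) = (p : ℚ) * x (r 0) := by
      rw [Finset.sum_congr rfl (fun i _ => hconst i), Finset.sum_const, Finset.card_univ,
        ZMod.card, nsmul_eq_mul]
    rw [e3] at hs
    have := (mul_eq_zero.mp hs.symm).resolve_left hpQ
    exact this
  have hru : ∀ i : ZMod p, x (r i) = 0 := fun i => (hconst i).trans hr0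
  have ha : a = 0 := by
    have hs : ∑ j : ZMod p, x (sr j) = (p : ℚ) * (-a) := by
      rw [Finset.sum_congr rfl (fun j _ => by rw [hw j, hru (-j)] : ∀ j ∈ Finset.univ,
        x (sr j) = -a - 0), Finset.sum_const, Finset.card_univ, ZMod.card, nsmul_eq_mul]
      ring
    rw [e4] at hs
    have := (mul_eq_zero.mp hs.symm).resolve_left hpQ
    linarith
  have hb : b = 0 := hab ▸ ha
  have hx : x = 0 := by
    funext g
    show x g = 0
    cases g with
    | r i => exact hru i
    | sr i => rw [hw i, hru (-i), ha]; ring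
  rw [Prod.mk_eq_zero, Prod.mk_eq_zero]
  exact ⟨hx, ha, hb⟩

lemma dim_eq [NeZero p] :
    Module.finrank ℚ ((DihedralGroup p → ℚ) × ℚ × ℚ) =
      Module.finrank ℚ ((ZMod p → ℚ) × (ZMod p → ℚ) × (Bool → ℚ)) := by
  simp only [Module.finrank_prod, Module.finrank_fintype_fun_eq_card, Module.finrank_self,
    DihedralGroup.card, ZMod.card, Fintype.card_bool]
  omega

end BrauerAux

open BrauerAux in
/-- `{e} + 2·D_{2p} − 2·C₂ − C_p` is a Brauer relation for the dihedral group `D_{2p}` of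
order `2p` (`p` an odd prime): writing `s = sr 0` and `r = r 1`, there is an isomorphism of
`ℚ[G]`-modules `ℚ[G/{e}] ⊕ ℚ[G/G]⊕² ≅ ℚ[G/⟨s⟩]⊕² ⊕ ℚ[G/⟨r⟩]`. -/
theorem brauer_relation_dihedral_2p (p : ℕ) (hp : p.Prime) (hodd : Odd p) :
    ∃ e : (((DihedralGroup p ⧸ (⊥ : Subgroup (DihedralGroup p))) →₀ ℚ) ×
            ((DihedralGroup p ⧸ (⊤ : Subgroup (DihedralGroup p))) →₀ ℚ) ×
            ((DihedralGroup p ⧸ (⊤ : Subgroup (DihedralGroup p))) →₀ ℚ)) ≃ₗ[ℚ]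
          (((DihedralGroup p ⧸ Subgroup.zpowers (DihedralGroup.sr 0)) →₀ ℚ) ×
            ((DihedralGroup p ⧸ Subgroup.zpowers (DihedralGroup.sr 0)) →₀ ℚ) ×
            ((DihedralGroup p ⧸ Subgroup.zpowers (DihedralGroup.r 1)) →₀ ℚ)),
      ∀ (g : DihedralGroup p)
        (v : ((DihedralGroup p ⧸ (⊥ : Subgroup (DihedralGroup p))) →₀ ℚ) ×
             ((DihedralGroup p ⧸ (⊤ : Subgroup (DihedralGroup p))) →₀ ℚ) ×
             ((DihedralGroup p ⧸ (⊤ : Subgroup (DihedralGroup p))) →₀ ℚ)),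
        e ((Representation.ofMulAction ℚ (DihedralGroup p)
             (DihedralGroup p ⧸ (⊥ : Subgroup (DihedralGroup p))) g (MonoidAlgebra.ofCoeff v.1)).coeff,
           (Representation.ofMulAction ℚ (DihedralGroup p)
             (DihedralGroup p ⧸ (⊤ : Subgroup (DihedralGroup p))) g (MonoidAlgebra.ofCoeff v.2.1)).coeff,
           (Representation.ofMulAction ℚ (DihedralGroup p)
             (DihedralGroup p ⧸ (⊤ : Subgroup (DihedralGroup p))) g (MonoidAlgebra.ofCoeff v.2.2)).coeff)
        = ((Representation.ofMulAction ℚ (DihedralGroup p)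
             (DihedralGroup p ⧸ Subgroup.zpowers (DihedralGroup.sr 0)) g (MonoidAlgebra.ofCoeff (e v).1)).coeff,
           (Representation.ofMulAction ℚ (DihedralGroup p)
             (DihedralGroup p ⧸ Subgroup.zpowers (DihedralGroup.sr 0)) g (MonoidAlgebra.ofCoeff (e v).2.1)).coeff,
           (Representation.ofMulAction ℚ (DihedralGroup p)
             (DihedralGroup p ⧸ Subgroup.zpowers (DihedralGroup.r 1)) g (MonoidAlgebra.ofCoeff (e v).2.2)).coeff) := by
  haveI : NeZero p := ⟨hp.ne_zero⟩
  haveI : Fact p.Prime := ⟨hp⟩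
  haveI := QuotientGroup.subsingleton_quotient_top (G := DihedralGroup p)
  haveI : Unique (DihedralGroup p ⧸ (⊤ : Subgroup (DihedralGroup p))) :=
    uniqueOfSubsingleton ((1 : DihedralGroup p) : _)
  let LT := Finsupp.LinearEquiv.finsuppUnique ℚ ℚ
    (DihedralGroup p ⧸ (⊤ : Subgroup (DihedralGroup p)))
  let ΦE := LinearMap.linearEquivOfInjective (Phi p) (Phi_injective hp hodd) dim_eq
  let EL := (LQ (eqB (p := p))).prodCongr (LT.prodCongr LT)
  let ER := (LQ (eqH (p := p))).prodCongr ((LQ (eqH (p := p))).prodCongr (LQ (eqR (p := p))))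
  refine ⟨EL.trans (ΦE.trans ER.symm), ?_⟩
  intro g v
  apply ER.injective
  show ER ((ER.symm) (ΦE (EL _))) = _
  rw [LinearEquiv.apply_symm_apply]
  have hEL : EL ((Representation.ofMulAction ℚ (DihedralGroup p)
        (DihedralGroup p ⧸ (⊥ : Subgroup (DihedralGroup p))) g (MonoidAlgebra.ofCoeff v.1)).coeff,
      (Representation.ofMulAction ℚ (DihedralGroup p)
        (DihedralGroup p ⧸ (⊤ : Subgroup (DihedralGroup p))) g (MonoidAlgebra.ofCoeff v.2.1)).coeff,
      (Representation.ofMulAction ℚ (DihedralGroup p)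
        (DihedralGroup p ⧸ (⊤ : Subgroup (DihedralGroup p))) g (MonoidAlgebra.ofCoeff v.2.2)).coeff)
      = (actB g (LQ eqB v.1), LT v.2.1, LT v.2.2) := by
    simp only [EL, LinearEquiv.prodCongr_apply, LQB_act, top_act]
  rw [hEL]
  have hPhi : ΦE (actB g (LQ eqB v.1), LT v.2.1, LT v.2.2)
      = Phi p (actB g (LQ eqB v.1), LT v.2.1, LT v.2.2) := rfl
  rw [hPhi, Phi_equivariant]
  have c1 : LQ eqH (((EL.trans (ΦE.trans ER.symm)) v).1)
      = (Phi p (LQ eqB v.1, LT v.2.1, LT v.2.2)).1 := by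
    show LQ eqH ((LQ eqH).symm ((Phi p (LQ eqB v.1, LT v.2.1, LT v.2.2)).1)) = _
    exact (LQ eqH).apply_symm_apply _
  have c2 : LQ eqH (((EL.trans (ΦE.trans ER.symm)) v).2.1)
      = (Phi p (LQ eqB v.1, LT v.2.1, LT v.2.2)).2.1 := by
    show LQ eqH ((LQ eqH).symm ((Phi p (LQ eqB v.1, LT v.2.1, LT v.2.2)).2.1)) = _
    exact (LQ eqH).apply_symm_apply _
  have c3 : LQ eqR (((EL.trans (ΦE.trans ER.symm)) v).2.2)
      = (Phi p (LQ eqB v.1, LT v.2.1, LT v.2.2)).2.2 := by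
    show LQ eqR ((LQ eqR).symm ((Phi p (LQ eqB v.1, LT v.2.1, LT v.2.2)).2.2)) = _
    exact (LQ eqR).apply_symm_apply _
  simp only [ER, LinearEquiv.prodCongr_apply, LQH_act, LQR_act, c1, c2, c3]
end

section
/- Let D₈ be the subgroup of GL₂(ℚ) generated by r = [[0,−1],[1,0]] and s = [[1,0],[0,−1]], a dihedral group of order 8 whose elements preserve the standard inner product ⟨·,·⟩ on ℚ². Then the fixed subspaces of ℚ² satisfy: Fix(⟨s, r²⟩) = 0, Fix(⟨sr, r²⟩) = 0, Fix(⟨s⟩) = ℚ·(1,0), and Fix(⟨sr⟩) = ℚ·(1,−1). Consequently, for every nonzero u ∈ Fix(⟨s⟩) and every nonzero w ∈ Fix(⟨sr⟩), the ratio ⟨u,u⟩/⟨w,w⟩ lies in 2·(ℚ^×)²; that is, the regulator constant 𝒞_Θ(ρ) of the 2-dimensional representation ρ of D₈ relative to Θ = ⟨s⟩ + ⟨sr,r²⟩ − ⟨sr⟩ − ⟨s,r²⟩ is ≡ 2 mod (ℚ^×)². -/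
/-- For `D₈ ≤ GL₂(ℚ)` generated by `r = [[0,-1],[1,0]]` and `s = [[1,0],[0,-1]]`:
the fixed subspaces of `ℚ²` under `⟨s,r²⟩` and `⟨sr,r²⟩` are zero, `Fix⟨s⟩ = ℚ·(1,0)`,
`Fix⟨sr⟩ = ℚ·(1,−1)`; consequently for nonzero fixed vectors `u ∈ Fix⟨s⟩`, `w ∈ Fix⟨sr⟩`,
the ratio `⟨u,u⟩/⟨w,w⟩` lies in `2·(ℚ^×)²`, i.e. the regulator constant of the 2-dimensional
representation of `D₈` relative to `Θ = ⟨s⟩ + ⟨sr,r²⟩ − ⟨sr⟩ − ⟨s,r²⟩` is `2 mod (ℚ^×)²`. -/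
theorem regulator_constant_D8_two_dim_rep
    (r s : Matrix (Fin 2) (Fin 2) ℚ)
    (hr : r = !![0, -1; 1, 0]) (hs : s = !![1, 0; 0, -1]) :
    (∀ v : Fin 2 → ℚ, s.mulVec v = v → (r * r).mulVec v = v → v = 0) ∧
    (∀ v : Fin 2 → ℚ, (s * r).mulVec v = v → (r * r).mulVec v = v → v = 0) ∧
    ({v : Fin 2 → ℚ | s.mulVec v = v} = Set.range fun q : ℚ => q • ![1, 0]) ∧
    ({v : Fin 2 → ℚ | (s * r).mulVec v = v} = Set.range fun q : ℚ => q • ![1, -1]) ∧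
    (∀ u w : Fin 2 → ℚ, u ≠ 0 → w ≠ 0 → s.mulVec u = u → (s * r).mulVec w = w →
      ∃ q : ℚ, q ≠ 0 ∧
        (u 0 * u 0 + u 1 * u 1) / (w 0 * w 0 + w 1 * w 1) = 2 * q ^ 2) := by
  subst hr hs
  refine ⟨?_, ?_, ?_, ?_, ?_⟩
  · intro v h1 h2
    have a := congrFun h2 0
    have b := congrFun h2 1
    simp [Matrix.mulVec, dotProduct, Matrix.mul_apply, Fin.sum_univ_two] at a b
    funext i; fin_cases i <;> simp <;> linarith
  · intro v h1 h2
    have a := congrFun h2 0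
    have b := congrFun h2 1
    simp [Matrix.mulVec, dotProduct, Matrix.mul_apply, Fin.sum_univ_two] at a b
    funext i; fin_cases i <;> simp <;> linarith
  · ext v
    simp only [Set.mem_setOf_eq, Set.mem_range]
    constructor
    · intro h
      have b := congrFun h 1
      simp [Matrix.mulVec, dotProduct, Fin.sum_univ_two] at b
      refine ⟨v 0, ?_⟩
      funext i; fin_cases i <;> simp <;> linarith
    · rintro ⟨q, rfl⟩
      funext i
      fin_cases i <;> simp [Matrix.mulVec, dotProduct, Fin.sum_univ_two]
  · ext v
    simp only [Set.mem_setOf_eq, Set.mem_range]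
    constructor
    · intro h
      have a := congrFun h 0
      simp [Matrix.mulVec, dotProduct, Matrix.mul_apply, Fin.sum_univ_two] at a
      refine ⟨v 0, ?_⟩
      funext i; fin_cases i <;> simp <;> linarith
    · rintro ⟨q, rfl⟩
      funext i
      fin_cases i <;>
        simp [Matrix.mulVec, dotProduct, Matrix.mul_apply, Fin.sum_univ_two]
  · intro u w hu hw h1 h2
    have hu1 : u 1 = 0 := by
      have b := congrFun h1 1
      simp [Matrix.mulVec, dotProduct, Fin.sum_univ_two] at b
      linarith
    have hw0 : w 0 = -w 1 := by
      have a := congrFun h2 0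
      simp [Matrix.mulVec, dotProduct, Matrix.mul_apply, Fin.sum_univ_two] at a
      linarith
    have hu0 : u 0 ≠ 0 := by
      intro h0
      apply hu
      funext i; fin_cases i <;> simpa
    have hw1 : w 1 ≠ 0 := by
      intro h0
      apply hw
      funext i; fin_cases i <;> simp_all
    refine ⟨u 0 / (2 * w 1), by positivity, ?_⟩
    rw [hu1, hw0]
    field_simp
    ring
end

section
/- Let p be an odd prime, let G = Sₚ × C₂ act on V = {x ∈ ℚᵖ : x₁ + ⋯ + x_p = 0} by (ρ, c)·x = (−1)ᶜ·(x_{ρ⁻¹(1)}, …, x_{ρ⁻¹(p)}), and let H' ≤ G be the subgroup generated by the elements (π, 0) for permutations π fixing p−1 and p, together with ((p−1 p), 1). With ⟨·,·⟩ the standard inner product on ℚᵖ, u₁ = (−(p−1), 1, …, 1) and u₂ = e_{p−1} − e_p, one has ⟨u₁,u₁⟩ = p(p−1), ⟨u₂,u₂⟩ = 2, and ((1/(p−1)!)·⟨u₁,u₁⟩) / ((1/(2(p−2)!))·⟨u₂,u₂⟩) = p. Consequently, for every nonzero u in the Stab(1)×{0}-fixed subspace of V and every nonzero w in the H'-fixed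 subspace of V, the quantity ((1/(p−1)!)·⟨u,u⟩) / ((1/(2(p−2)!))·⟨w,w⟩) lies in p·(ℚ^×)²; that is, the regulator constant 𝒞_Θ(σ⊗ε) ≡ p mod (ℚ^×)² for Θ = (S_{p−1}×{e}) − (Sₚ×{e}) − H'. -/
/-- The sign `(−1)ᶜ` for `c ∈ C₂ = ℤ/2ℤ` (written multiplicatively). -/
def C2Sign (c : Multiplicative (ZMod 2)) : ℚ := (-1 : ℚ) ^ (Multiplicative.toAdd c).val

/-- The action of `Sₚ × C₂` on `ℚᵖ` given by `(ρ, c)·x = (−1)ᶜ·(x ∘ ρ⁻¹)`. -/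
def permSignAct (p : ℕ) (g : Equiv.Perm (Fin p) × Multiplicative (ZMod 2)) (x : Fin p → ℚ) :
    Fin p → ℚ :=
  fun i => C2Sign g.2 * x (g.1⁻¹ i)

/-- The subgroup `H' ≤ Sₚ × C₂` generated by the elements `(π, 0)` with `π` fixing `a` and `b`,
together with `((a b), 1)`. -/
def Hprime (p : ℕ) (a b : Fin p) : Subgroup (Equiv.Perm (Fin p) × Multiplicative (ZMod 2)) :=
  Subgroup.closure
    ({g | g.2 = 1 ∧ g.1 a = a ∧ g.1 b = b} ∪ {(Equiv.swap a b, Multiplicative.ofAdd 1)})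

/-- With the standard inner product on `ℚᵖ`, `u₁ = (−(p−1),1,…,1)` and `u₂ = e_{p−1} − e_p`:
`⟨u₁,u₁⟩ = p(p−1)`, `⟨u₂,u₂⟩ = 2`, and
`((1/(p−1)!)·⟨u₁,u₁⟩)/((1/(2(p−2)!))·⟨u₂,u₂⟩) = p`. Consequently for any nonzero `u` in the
`Stab(1)×{0}`-fixed subspace of the zero-sum hyperplane `V` and nonzero `w` in the `H'`-fixed
subspace of `V`, the quantity `((1/(p−1)!)·⟨u,u⟩)/((1/(2(p−2)!))·⟨w,w⟩)` lies in `p·(ℚ^×)²`;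
i.e. the regulator constant `𝒞_Θ(σ⊗ε) ≡ p mod (ℚ^×)²` for
`Θ = (S_{p−1}×{e}) − (Sₚ×{e}) − H'`. -/
theorem regulator_constant_sigma_tensor_epsilon (p : ℕ) (hp : p.Prime) (hodd : Odd p)
    (a b : Fin p) (ha : (a : ℕ) = p - 2) (hb : (b : ℕ) = p - 1)
    (u₁ u₂ : Fin p → ℚ)
    (hu₁ : u₁ = fun i => if i = (⟨0, hp.pos⟩ : Fin p) then -((p : ℚ) - 1) else 1)
    (hu₂ : u₂ = fun i => if i = a then (1 : ℚ) else if i = b then -1 else 0) :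
    (∑ i, u₁ i * u₁ i = (p : ℚ) * ((p : ℚ) - 1)) ∧
    (∑ i, u₂ i * u₂ i = 2) ∧
    ((1 / ((p - 1).factorial : ℚ) * ∑ i, u₁ i * u₁ i) /
        (1 / (2 * ((p - 2).factorial : ℚ)) * ∑ i, u₂ i * u₂ i) = p) ∧
    ∀ u w : Fin p → ℚ, u ≠ 0 → w ≠ 0 →
      (∑ i, u i = 0) →
      (∀ ρ : Equiv.Perm (Fin p), ρ ⟨0, hp.pos⟩ = ⟨0, hp.pos⟩ → permSignAct p (ρ, 1) u = u) →
      (∑ i, w i = 0) →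
      (∀ g ∈ Hprime p a b, permSignAct p g w = w) →
      ∃ q : ℚ, q ≠ 0 ∧
        (1 / ((p - 1).factorial : ℚ) * ∑ i, u i * u i) /
          (1 / (2 * ((p - 2).factorial : ℚ)) * ∑ i, w i * w i) = p * q ^ 2 := by
  -- basic numerics
  have hp3 : 3 ≤ p := by
    rcases hodd with ⟨k, hk⟩
    have h2 := hp.two_le
    omega
  set z : Fin p := ⟨0, hp.pos⟩ with hz
  have hza : (z : ℕ) = 0 := rfl
  have haz : a ≠ z := by
    intro h; rw [h] at ha; rw [hza] at ha; omega
  have hbz : b ≠ z := by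
    intro h; rw [h] at hb; rw [hza] at hb; omega
  have hab : a ≠ b := by
    intro h; rw [h] at ha; omega
  have hcast1 : ((p - 1).factorial : ℚ) = ((p : ℚ) - 1) * ((p - 2).factorial : ℚ) := by
    have h1 : p - 1 = (p - 2) + 1 := by omega
    rw [h1, Nat.factorial_succ]
    push_cast
    have : ((p - 2 : ℕ) : ℚ) = (p : ℚ) - 2 := by
      have : (2 : ℕ) ≤ p := by omega
      push_cast [Nat.cast_sub this]; ring
    rw [this]; ring
  have hpQ : (3 : ℚ) ≤ (p : ℚ) := by exact_mod_cast hp3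
  have hpm1 : (p : ℚ) - 1 ≠ 0 := by intro h; linarith
  have hf2 : ((p - 2).factorial : ℚ) ≠ 0 := by
    exact_mod_cast Nat.cast_ne_zero.mpr (p - 2).factorial_ne_zero
  have hf1 : ((p - 1).factorial : ℚ) ≠ 0 := by
    exact_mod_cast Nat.cast_ne_zero.mpr (p - 1).factorial_ne_zero
  -- sign computations
  have hsign1 : C2Sign 1 = 1 := by
    simp [C2Sign]
  have hsign2 : C2Sign (Multiplicative.ofAdd 1) = -1 := by
    have : ((1 : ZMod 2)).val = 1 := by decide
    simp [C2Sign, this]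
  -- first sum
  have hS1 : ∑ i, u₁ i * u₁ i = (p : ℚ) * ((p : ℚ) - 1) := by
    rw [hu₁]
    have key : ∀ i : Fin p,
        (if i = z then -((p : ℚ) - 1) else 1) * (if i = z then -((p : ℚ) - 1) else 1)
          = 1 + (if i = z then ((p : ℚ) - 1) ^ 2 - 1 else 0) := by
      intro i; by_cases h : i = z <;> simp [h] <;> ring
    calc ∑ i : Fin p, (if i = z then -((p : ℚ) - 1) else 1) * (if i = z then -((p : ℚ) - 1) else 1)
        = ∑ i : Fin p, (1 + (if i = z then ((p : ℚ) - 1) ^ 2 - 1 else 0)) :=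
          Finset.sum_congr rfl fun i _ => key i
      _ = (p : ℚ) * ((p : ℚ) - 1) := by
          rw [Finset.sum_add_distrib, Finset.sum_const, Finset.sum_ite_eq' Finset.univ z]
          simp [Finset.card_univ]
          ring
  have hS2 : ∑ i, u₂ i * u₂ i = 2 := by
    rw [hu₂]
    have key : ∀ i : Fin p,
        (if i = a then (1 : ℚ) else if i = b then -1 else 0) *
          (if i = a then (1 : ℚ) else if i = b then -1 else 0)
          = (if i = a then (1 : ℚ) else 0) + (if i = b then (1 : ℚ) else 0) := by
      intro i
      by_cases h1 : i = a
      · subst h1; simp [hab]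
      · by_cases h2 : i = b
        · subst h2; simp [Ne.symm hab]
        · simp [h1, h2]
    calc ∑ i : Fin p, (if i = a then (1 : ℚ) else if i = b then -1 else 0) *
          (if i = a then (1 : ℚ) else if i = b then -1 else 0)
        = ∑ i : Fin p, ((if i = a then (1 : ℚ) else 0) + (if i = b then (1 : ℚ) else 0)) :=
          Finset.sum_congr rfl fun i _ => key i
      _ = 2 := by
          rw [Finset.sum_add_distrib, Finset.sum_ite_eq' Finset.univ a,
            Finset.sum_ite_eq' Finset.univ b]
          norm_num
  refine ⟨hS1, hS2, ?_, ?_⟩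
  · rw [hS1, hS2, hcast1]
    field_simp
  · intro u w hu0 hw0 husum hufix hwsum hwfix
    -- structure of u
    have hu_const : ∀ i : Fin p, i ≠ z → u i = u a := by
      intro i hi
      by_cases hia : i = a
      · rw [hia]
      · have hfix : Equiv.swap i a z = z :=
          Equiv.swap_apply_of_ne_of_ne (Ne.symm hi) (Ne.symm haz)
        have h := congrFun (hufix (Equiv.swap i a) hfix) i
        simp only [permSignAct, hsign1, one_mul, Equiv.swap_inv, Equiv.swap_apply_left] at h
        exact h.symm
    have husum' : u z + ((p : ℚ) - 1) * u a = 0 := by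
      have herase : ∑ i ∈ Finset.univ.erase z, u i = ((p : ℚ) - 1) * u a := by
        rw [Finset.sum_congr rfl (fun i hi => hu_const i (Finset.ne_of_mem_erase hi)),
          Finset.sum_const, Finset.card_erase_of_mem (Finset.mem_univ z),
          Finset.card_univ, Fintype.card_fin, nsmul_eq_mul]
        have : ((p - 1 : ℕ) : ℚ) = (p : ℚ) - 1 := by
          push_cast [Nat.cast_sub hp.one_le]; ring
        rw [this]
      have hsplit := Finset.add_sum_erase Finset.univ u (Finset.mem_univ z)
      rw [herase, husum] at hsplit
      exact hsplit
    have huz : u z = -(((p : ℚ) - 1) * u a) := by linarith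
    have hua0 : u a ≠ 0 := by
      intro h
      apply hu0
      funext i
      by_cases hi : i = z
      · rw [hi]; simp [huz, h]
      · simp [hu_const i hi, h]
    have hsum_u : ∑ i, u i * u i = (p : ℚ) * ((p : ℚ) - 1) * (u a) ^ 2 := by
      rw [← Finset.add_sum_erase Finset.univ (fun i => u i * u i) (Finset.mem_univ z)]
      have herase : ∑ i ∈ Finset.univ.erase z, u i * u i = ((p : ℚ) - 1) * (u a) ^ 2 := by
        rw [Finset.sum_congr rfl (fun i hi => by rw [hu_const i (Finset.ne_of_mem_erase hi)]),
          Finset.sum_const, Finset.card_erase_of_mem (Finset.mem_univ z),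
          Finset.card_univ, Fintype.card_fin, nsmul_eq_mul]
        have : ((p - 1 : ℕ) : ℚ) = (p : ℚ) - 1 := by
          push_cast [Nat.cast_sub hp.one_le]; ring
        rw [this]; ring
      rw [herase, huz]; ring
    -- structure of w
    have hmem : (Equiv.swap a b, Multiplicative.ofAdd (1 : ZMod 2)) ∈ Hprime p a b := by
      apply Subgroup.subset_closure
      exact Set.mem_union_right _ rfl
    have hg2 := hwfix _ hmem
    have hw_zero : ∀ i : Fin p, i ≠ a → i ≠ b → w i = 0 := by
      intro i hia hib
      have h := congrFun hg2 i
      simp only [permSignAct, hsign2, Equiv.swap_inv] at h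
      rw [Equiv.swap_apply_of_ne_of_ne hia hib] at h
      linarith
    have hwb : w b = -(w a) := by
      have h := congrFun hg2 b
      simp only [permSignAct, hsign2, Equiv.swap_inv, Equiv.swap_apply_right] at h
      linarith
    have hwa0 : w a ≠ 0 := by
      intro h
      apply hw0
      funext i
      by_cases h1 : i = a
      · simp [h1, h]
      · by_cases h2 : i = b
        · simp [h2, hwb, h]
        · simp [hw_zero i h1 h2]
    have hsum_w : ∑ i, w i * w i = 2 * (w a) ^ 2 := by
      have key : ∀ i : Fin p, w i * w i =
          (if i = a then (w a) ^ 2 else 0) + (if i = b then (w a) ^ 2 else 0) := by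
        intro i
        by_cases h1 : i = a
        · subst h1; simp [hab, sq]
        · by_cases h2 : i = b
          · subst h2; simp [Ne.symm hab, h1, hwb]; ring
          · simp [h1, h2, hw_zero i h1 h2]
      calc ∑ i, w i * w i
          = ∑ i : Fin p, ((if i = a then (w a) ^ 2 else 0) + (if i = b then (w a) ^ 2 else 0)) :=
            Finset.sum_congr rfl fun i _ => key i
        _ = 2 * (w a) ^ 2 := by
            rw [Finset.sum_add_distrib, Finset.sum_ite_eq' Finset.univ a,
              Finset.sum_ite_eq' Finset.univ b]
            simp; ring
    refine ⟨u a / w a, div_ne_zero hua0 hwa0, ?_⟩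
    rw [hsum_u, hsum_w, hcast1]
    field_simp
end

section
/- Let p be an odd prime, let G = Sₚ × C₂, and let ε be the one-dimensional representation of G on ℚ with (ρ, c) acting as multiplication by (−1)ᶜ. Let H' ≤ G be the subgroup generated by the elements (π, 0) for permutations π fixing p−1 and p, together with ((p−1 p), 1). Then the fixed subspace of ε under Stab(1)×{0} is all of ℚ, the fixed subspace under Sₚ×{0} is all of ℚ, and the fixed subspace under H' is 0. Consequently, for all nonzero u, v ∈ ℚ, the quantity ((1/(p−1)!)·u²) / ((1/p!)·v²) lies in p·(ℚ^×)²; that is, the regulator constant 𝒞_Θ(ε) ≡ p mod (ℚ^×)² for Θ = (S_{p−1}×{e}) − (Sₚ×{e}) − H'. -/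
/-- For the one-dimensional representation `ε` of `G = Sₚ × C₂` on `ℚ`, with `(ρ,c)` acting by
`(−1)ᶜ`: the fixed subspace under `Stab(1)×{0}` is all of `ℚ`, under `Sₚ×{0}` is all of `ℚ`, and
under `H'` is `0`. Consequently for all nonzero `u, v ∈ ℚ`,
`((1/(p−1)!)·u²)/((1/p!)·v²)` lies in `p·(ℚ^×)²`; i.e. the regulator constant
`𝒞_Θ(ε) ≡ p mod (ℚ^×)²` for `Θ = (S_{p−1}×{e}) − (Sₚ×{e}) − H'`. -/
theorem regulator_constant_epsilon (p : ℕ) (hp : p.Prime) (hodd : Odd p)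
    (a b : Fin p) (ha : (a : ℕ) = p - 2) (hb : (b : ℕ) = p - 1) :
    ({t : ℚ | ∀ g : Equiv.Perm (Fin p) × Multiplicative (ZMod 2),
        g.2 = 1 → g.1 ⟨0, hp.pos⟩ = ⟨0, hp.pos⟩ → C2Sign g.2 * t = t} = Set.univ) ∧
    ({t : ℚ | ∀ g : Equiv.Perm (Fin p) × Multiplicative (ZMod 2),
        g.2 = 1 → C2Sign g.2 * t = t} = Set.univ) ∧
    ({t : ℚ | ∀ g ∈ Hprime p a b, C2Sign g.2 * t = t} = {0}) ∧
    ∀ u v : ℚ, u ≠ 0 → v ≠ 0 →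
      ∃ q : ℚ, q ≠ 0 ∧
        (1 / ((p - 1).factorial : ℚ) * u ^ 2) / (1 / (p.factorial : ℚ) * v ^ 2) = p * q ^ 2 := by
  have hsign1 : ∀ c : Multiplicative (ZMod 2), c = 1 → C2Sign c = 1 := by
    intro c hc
    subst hc
    simp [C2Sign]
  refine ⟨?_, ?_, ?_, ?_⟩
  · ext t
    simp only [Set.mem_setOf_eq, Set.mem_univ, iff_true]
    intro g hg _
    rw [hsign1 _ hg, one_mul]
  · ext t
    simp only [Set.mem_setOf_eq, Set.mem_univ, iff_true]
    intro g hg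
    rw [hsign1 _ hg, one_mul]
  · ext t
    simp only [Set.mem_setOf_eq, Set.mem_singleton_iff]
    constructor
    · intro h
      have hmem : (Equiv.swap a b, Multiplicative.ofAdd (1 : ZMod 2)) ∈ Hprime p a b :=
        Subgroup.subset_closure (Or.inr rfl)
      have := h _ hmem
      have hsign : C2Sign (Multiplicative.ofAdd (1 : ZMod 2)) = -1 := by
        have : (1 : ZMod 2).val = 1 := rfl
        simp [C2Sign, this]
      rw [hsign] at this
      linarith
    · intro h
      subst h
      intro g _
      ring
  · intro u v hu hv
    refine ⟨u / v, div_ne_zero hu hv, ?_⟩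
    have hfact : (p.factorial : ℚ) = p * ((p - 1).factorial : ℚ) := by
      rw [← Nat.mul_factorial_pred hp.pos.ne']
      push_cast
      ring
    have h1 : ((p - 1).factorial : ℚ) ≠ 0 := Nat.cast_ne_zero.mpr (p - 1).factorial_ne_zero
    have h2 : (p : ℚ) ≠ 0 := Nat.cast_ne_zero.mpr hp.pos.ne'
    rw [hfact]
    field_simp
end

section
/- Let p be an odd prime, G = Sₚ × C₂, and let H' ≤ G be the subgroup generated by the elements (π, 0) for permutations π fixing p−1 and p, together with ((p−1 p), 1). Let τ = (t, 0) ∈ G where t ∈ Sₚ is a single transposition. Then the number of double cosets ⟨τ⟩\G/H' equals p² − 3p + 3. -/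
/-- Setoid identifying `x` with `f x`, for `f` an involution. -/
def involSetoid {X : Type*} (f : X → X) (hf : ∀ x, f (f x) = x) : Setoid X where
  r x y := y = x ∨ y = f x
  iseqv := by
    constructor
    · exact fun x => Or.inl rfl
    · rintro x y (rfl | rfl)
      · exact Or.inl rfl
      · exact Or.inr (hf x).symm
    · rintro x y z (rfl | rfl) h
      · exact h
      · rcases h with rfl | rfl
        · exact Or.inr rfl
        · exact Or.inl (hf x)

lemma card_quot_invol {X : Type*} [Fintype X] [DecidableEq X] (f : X → X)
    (hf : ∀ x, f (f x) = x) :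
    2 * Nat.card (Quotient (involSetoid f hf)) = Nat.card X + Nat.card {x : X // f x = x} := by
  classical
  letI s := involSetoid f hf
  letI : Fintype (Quotient s) := Quotient.fintype s
  rw [Nat.card_eq_fintype_card, Nat.card_eq_fintype_card, Nat.card_eq_fintype_card]
  have key : ∀ q : Quotient s,
      (Finset.univ.filter fun x => Quotient.mk s x = q).card
        + (Finset.univ.filter fun x => Quotient.mk s x = q ∧ f x = x).card = 2 := by
    intro q
    obtain ⟨x₀, rfl⟩ := Quotient.exists_rep q
    have hmem : ∀ x, Quotient.mk s x = Quotient.mk s x₀ ↔ (x = x₀ ∨ x = f x₀) := by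
      intro x
      rw [Quotient.eq]
      show x₀ = x ∨ x₀ = f x ↔ _
      constructor
      · rintro (rfl | rfl)
        · exact Or.inl rfl
        · exact Or.inr (hf x).symm
      · rintro (rfl | rfl)
        · exact Or.inl rfl
        · exact Or.inr (hf x₀).symm
    by_cases hfix : f x₀ = x₀
    · have h1 : (Finset.univ.filter fun x => Quotient.mk s x = Quotient.mk s x₀) = {x₀} := by
        ext x; simp [hmem, hfix]
      have h2 : (Finset.univ.filter fun x => Quotient.mk s x = Quotient.mk s x₀ ∧ f x = x)
          = {x₀} := by
        ext x
        simp only [Finset.mem_filter, Finset.mem_univ, true_and, hmem, hfix, or_self,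
          Finset.mem_singleton]
        constructor
        · exact fun h => h.1
        · rintro rfl; exact ⟨rfl, hfix⟩
      rw [h1, h2]; simp
    · have h1 : (Finset.univ.filter fun x => Quotient.mk s x = Quotient.mk s x₀)
          = {x₀, f x₀} := by
        ext x; simp [hmem]
      have h2 : (Finset.univ.filter fun x => Quotient.mk s x = Quotient.mk s x₀ ∧ f x = x)
          = ∅ := by
        ext x
        simp only [Finset.mem_filter, Finset.mem_univ, true_and, hmem, Finset.notMem_empty,
          iff_false, not_and]
        rintro (rfl | rfl)
        · exact hfix
        · intro h; exact hfix ((hf x₀).symm.trans h).symm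
      rw [h1, h2]
      rw [Finset.card_insert_of_notMem (by simpa using fun h => hfix h.symm)]
      simp
  have hA : Fintype.card X
      = ∑ q : Quotient s, (Finset.univ.filter fun x => Quotient.mk s x = q).card := by
    rw [← Finset.card_univ]
    exact Finset.card_eq_sum_card_fiberwise (fun x _ => Finset.mem_univ _)
  have hB : Fintype.card {x : X // f x = x}
      = ∑ q : Quotient s, (Finset.univ.filter fun x => Quotient.mk s x = q ∧ f x = x).card := by
    rw [Fintype.card_subtype]
    rw [Finset.card_eq_sum_card_fiberwise
      (f := fun x => Quotient.mk s x) (t := Finset.univ) (fun x _ => Finset.mem_univ _)]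
    congr 1
    ext q
    congr 1
    ext x
    simp [and_comm]
  rw [hA, hB, ← Finset.sum_add_distrib]
  simp only [key]
  simp [mul_comm]
  exact Fintype.card_congr (Equiv.refl _)

lemma two_cases (c : Multiplicative (ZMod 2)) : c = 1 ∨ c = Multiplicative.ofAdd 1 := by
  revert c; decide

lemma mem_Hprime {p : ℕ} {a b : Fin p} (hab : a ≠ b)
    (g : Equiv.Perm (Fin p) × Multiplicative (ZMod 2)) :
    g ∈ Hprime p a b ↔
      (g.2 = 1 ∧ g.1 a = a ∧ g.1 b = b) ∨
        (g.2 = Multiplicative.ofAdd 1 ∧ g.1 a = b ∧ g.1 b = a) := by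
  have hee : (Multiplicative.ofAdd (1 : ZMod 2)) * Multiplicative.ofAdd 1 = 1 := by decide
  have heinv : (Multiplicative.ofAdd (1 : ZMod 2))⁻¹ = Multiplicative.ofAdd 1 := by decide
  let S : Subgroup (Equiv.Perm (Fin p) × Multiplicative (ZMod 2)) :=
  { carrier := {g | (g.2 = 1 ∧ g.1 a = a ∧ g.1 b = b) ∨
        (g.2 = Multiplicative.ofAdd 1 ∧ g.1 a = b ∧ g.1 b = a)}
    one_mem' := Or.inl ⟨rfl, rfl, rfl⟩
    mul_mem' := by
      rintro ⟨x1, x2⟩ ⟨y1, y2⟩ (⟨hx2, hxa, hxb⟩ | ⟨hx2, hxa, hxb⟩)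
          (⟨hy2, hya, hyb⟩ | ⟨hy2, hya, hyb⟩) <;>
        simp only [Set.mem_setOf_eq, Prod.mk_mul_mk, Equiv.Perm.mul_apply] at *  <;>
        subst hx2 <;> subst hy2 <;>
        simp [hya, hyb, hxa, hxb, hee]
    inv_mem' := by
      rintro ⟨x1, x2⟩ (⟨hx2, hxa, hxb⟩ | ⟨hx2, hxa, hxb⟩) <;>
        simp only [Set.mem_setOf_eq, Prod.inv_mk] at * <;> subst hx2
      · exact Or.inl ⟨inv_one, by rw [Equiv.Perm.inv_eq_iff_eq, hxa],
          by rw [Equiv.Perm.inv_eq_iff_eq, hxb]⟩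
      · exact Or.inr ⟨heinv, by rw [Equiv.Perm.inv_eq_iff_eq, hxb],
          by rw [Equiv.Perm.inv_eq_iff_eq, hxa]⟩ }
  constructor
  · intro hg
    have h1 : Hprime p a b ≤ S := by
      rw [Hprime]
      apply (Subgroup.closure_le S).mpr
      rintro g (⟨h1, h2, h3⟩ | rfl)
      · exact Or.inl ⟨h1, h2, h3⟩
      · exact Or.inr ⟨rfl, Equiv.swap_apply_left a b, Equiv.swap_apply_right a b⟩
    exact h1 hg
  · rintro (⟨h2, ha', hb'⟩ | ⟨h2, ha', hb'⟩)
    · exact Subgroup.subset_closure (Or.inl ⟨h2, ha', hb'⟩)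
    · have hg : g = (g.1 * Equiv.swap a b, (1 : Multiplicative (ZMod 2)))
          * (Equiv.swap a b, Multiplicative.ofAdd 1) := by
        ext
        · simp [mul_assoc, Equiv.swap_mul_self]
        · simp [h2]
      rw [hg]
      refine mul_mem (Subgroup.subset_closure (Or.inl ⟨rfl, ?_, ?_⟩))
        (Subgroup.subset_closure (Or.inr rfl))
      · simp [Equiv.Perm.mul_apply, Equiv.swap_apply_left, hb']
      · simp [Equiv.Perm.mul_apply, Equiv.swap_apply_right, ha']

lemma exists_perm {p : ℕ} {a b u v : Fin p} (hab : a ≠ b) (huv : u ≠ v) :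
    ∃ σ : Equiv.Perm (Fin p), σ a = u ∧ σ b = v := by
  refine ⟨Equiv.swap (Equiv.swap a u b) v * Equiv.swap a u, ?_, ?_⟩
  · rw [Equiv.Perm.mul_apply, Equiv.swap_apply_left]
    refine Equiv.swap_apply_of_ne_of_ne (fun h => hab ?_) huv
    have := congrArg (Equiv.swap a u) h
    rwa [Equiv.swap_apply_right, Equiv.swap_apply_self] at this
  · rw [Equiv.Perm.mul_apply]
    exact Equiv.swap_apply_left _ _

lemma mem_zpowers_sq {G : Type*} [Group G] {g k : G} (hg : g * g = 1)
    (hk : k ∈ Subgroup.zpowers g) : k = 1 ∨ k = g := by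
  obtain ⟨n, rfl⟩ := hk
  have h2 : g ^ (2 : ℤ) = 1 := by
    rw [show (2 : ℤ) = ((2 : ℕ) : ℤ) by norm_num, zpow_natCast, pow_two, hg]
  rcases Int.even_or_odd n with ⟨m, hm⟩ | ⟨m, hm⟩
  · left; show g ^ n = 1; rw [hm, ← two_mul, zpow_mul, h2, one_zpow]
  · right; show g ^ n = g; rw [hm, zpow_add, zpow_mul, h2, one_zpow, one_mul, zpow_one]

abbrev pairX (p : ℕ) := {q : Fin p × Fin p // q.1 ≠ q.2}

def phi {p : ℕ} {a b : Fin p} (hab : a ≠ b)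
    (g : Equiv.Perm (Fin p) × Multiplicative (ZMod 2)) : pairX p :=
  if g.2 = 1 then ⟨(g.1 a, g.1 b), g.1.injective.ne hab⟩
  else ⟨(g.1 b, g.1 a), g.1.injective.ne hab.symm⟩

def pmap {p : ℕ} (t : Equiv.Perm (Fin p)) (q : pairX p) : pairX p :=
  ⟨(t q.1.1, t q.1.2), t.injective.ne q.2⟩

lemma hne1 : (Multiplicative.ofAdd (1 : ZMod 2)) ≠ 1 := by decide

lemma phi_mul_right {p : ℕ} {a b : Fin p} (hab : a ≠ b)
    (g h : Equiv.Perm (Fin p) × Multiplicative (ZMod 2)) (hh : h ∈ Hprime p a b) :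
    phi hab (g * h) = phi hab g := by
  rw [mem_Hprime hab] at hh
  rcases two_cases g.2 with hg2 | hg2 <;>
    rcases hh with ⟨hh2, hha, hhb⟩ | ⟨hh2, hha, hhb⟩ <;>
      simp [phi, Prod.snd_mul, Prod.fst_mul, hg2, hh2, hne1, Equiv.Perm.mul_apply, hha, hhb,
        hne1.symm, show (Multiplicative.ofAdd (1 : ZMod 2)) * Multiplicative.ofAdd 1 = 1 by decide]

lemma phi_eq_imp {p : ℕ} {a b : Fin p} (hab : a ≠ b)
    (g g' : Equiv.Perm (Fin p) × Multiplicative (ZMod 2)) (h : phi hab g = phi hab g') :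
    g⁻¹ * g' ∈ Hprime p a b := by
  rw [mem_Hprime hab]
  rcases two_cases g.2 with hg2 | hg2 <;> rcases two_cases g'.2 with hg2' | hg2' <;>
      simp only [phi, hg2, hg2', hne1, if_true, if_pos, if_neg, reduceIte, Subtype.mk.injEq,
        Prod.mk.injEq] at h <;>
    obtain ⟨h1, h2⟩ := h
  · exact Or.inl ⟨by simp [Prod.snd_mul, hg2, hg2'], by simp [Prod.fst_mul, ← h1],
      by simp [Prod.fst_mul, ← h2]⟩
  · exact Or.inr ⟨by simp [Prod.snd_mul, hg2, hg2'], by simp [Prod.fst_mul, ← h2],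
      by simp [Prod.fst_mul, ← h1]⟩
  · exact Or.inr ⟨by simp [Prod.snd_mul, hg2, hg2']; decide, by simp [Prod.fst_mul, ← h1],
      by simp [Prod.fst_mul, ← h2]⟩
  · exact Or.inl ⟨by simp [Prod.snd_mul, hg2, hg2'], by simp [Prod.fst_mul, ← h2],
      by simp [Prod.fst_mul, ← h1]⟩

lemma phi_tau {p : ℕ} {a b : Fin p} (hab : a ≠ b) (t : Equiv.Perm (Fin p))
    (g : Equiv.Perm (Fin p) × Multiplicative (ZMod 2)) :
    phi hab (((t, 1) : Equiv.Perm (Fin p) × Multiplicative (ZMod 2)) * g) = pmap t (phi hab g) := by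
  rcases two_cases g.2 with hg2 | hg2 <;>
    simp [phi, pmap, Prod.snd_mul, Prod.fst_mul, hg2, hne1, Equiv.Perm.mul_apply]

lemma card_pairX (p : ℕ) : Nat.card (pairX p) = p * p - p := by
  classical
  rw [Nat.card_eq_fintype_card, Fintype.card_subtype]
  have h : (Finset.univ.filter fun q : Fin p × Fin p => q.1 ≠ q.2)
      = (Finset.univ : Finset (Fin p)).offDiag := by
    ext r; simp [Finset.mem_offDiag]
  rw [h, Finset.offDiag_card, Finset.card_univ, Fintype.card_fin]

lemma card_fixed {p : ℕ} {x y : Fin p} (hxy : x ≠ y) :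
    Nat.card {q : pairX p // pmap (Equiv.swap x y) q = q} = (p - 2) * (p - 2) - (p - 2) := by
  classical
  have hiff : ∀ u : Fin p, Equiv.swap x y u = u ↔ (u ≠ x ∧ u ≠ y) := by
    intro u
    constructor
    · intro h
      constructor <;> rintro rfl
      · rw [Equiv.swap_apply_left] at h; exact hxy h.symm
      · rw [Equiv.swap_apply_right] at h; exact hxy h
    · exact fun h => Equiv.swap_apply_of_ne_of_ne h.1 h.2
  have e : {q : pairX p // pmap (Equiv.swap x y) q = q}
      ≃ {r : Fin p × Fin p //
          r.1 ≠ r.2 ∧ (Equiv.swap x y r.1 = r.1 ∧ Equiv.swap x y r.2 = r.2)} := by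
    refine (Equiv.subtypeEquivRight ?_).trans (Equiv.subtypeSubtypeEquivSubtypeInter _ _)
    intro q
    simp [pmap, Subtype.ext_iff, Prod.ext_iff]
  rw [Nat.card_congr e, Nat.card_eq_fintype_card, Fintype.card_subtype]
  have h : (Finset.univ.filter fun r : Fin p × Fin p =>
        r.1 ≠ r.2 ∧ (Equiv.swap x y r.1 = r.1 ∧ Equiv.swap x y r.2 = r.2))
      = (Finset.univ.filter fun u : Fin p => Equiv.swap x y u = u).offDiag := by
    ext r
    simp only [Finset.mem_filter, Finset.mem_univ, true_and, Finset.mem_offDiag]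
    tauto
  rw [h, Finset.offDiag_card]
  have hFx : (Finset.univ.filter fun u : Fin p => Equiv.swap x y u = u).card = p - 2 := by
    have h2 : (Finset.univ.filter fun u : Fin p => Equiv.swap x y u = u)
        = Finset.univ \ {x, y} := by
      ext u
      simp [hiff u, Finset.mem_sdiff, not_or]
    rw [h2, Finset.card_sdiff_of_subset (Finset.subset_univ _), Finset.card_univ, Fintype.card_fin,
      Finset.card_pair hxy]
  rw [hFx]

/-- For `τ = (t, 0) ∈ G = Sₚ × C₂` with `t` a single transposition, the number of double
cosets `⟨τ⟩\G/H'` is `p² − 3p + 3`. -/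
theorem double_coset_count_transposition (p : ℕ) (hp : p.Prime) (hodd : Odd p)
    (a b : Fin p) (ha : (a : ℕ) = p - 2) (hb : (b : ℕ) = p - 1)
    (t : Equiv.Perm (Fin p)) (ht : t.IsSwap) :
    Nat.card (DoubleCoset.Quotient
        ((Subgroup.zpowers ((t, 1) : Equiv.Perm (Fin p) × Multiplicative (ZMod 2)) :
          Subgroup (Equiv.Perm (Fin p) × Multiplicative (ZMod 2))) :
            Set (Equiv.Perm (Fin p) × Multiplicative (ZMod 2)))
        ((Hprime p a b : Subgroup (Equiv.Perm (Fin p) × Multiplicative (ZMod 2))) :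
            Set (Equiv.Perm (Fin p) × Multiplicative (ZMod 2))))
      = p ^ 2 - 3 * p + 3 := by
  classical
  obtain ⟨x, y, hxy, rfl⟩ := ht
  have hp3 : 3 ≤ p := by
    have h2 := hp.two_le
    rcases hodd with ⟨k, hk⟩
    omega
  have hab : a ≠ b := by
    intro h
    have hv : (a : ℕ) = (b : ℕ) := congrArg _ h
    omega
  set t := Equiv.swap x y with hT
  have hinv : ∀ q : pairX p, pmap t (pmap t q) = q := by
    intro q
    apply Subtype.ext
    apply Prod.ext <;> simp [pmap, hT, Equiv.swap_apply_self]
  set sQ := involSetoid (pmap t) hinv with hsQ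
  set τ : Equiv.Perm (Fin p) × Multiplicative (ZMod 2) := (t, 1) with hτ
  have hττ : τ * τ = 1 := by
    rw [hτ, Prod.mk_mul_mk, hT, Equiv.swap_mul_self, one_mul]
    rfl
  have Fconst : ∀ g g' : Equiv.Perm (Fin p) × Multiplicative (ZMod 2),
      (DoubleCoset.setoid (↑(Subgroup.zpowers τ)) (↑(Hprime p a b))) g g' →
      Quotient.mk sQ (phi hab g) = Quotient.mk sQ (phi hab g') := by
    intro g g' hrel
    rw [DoubleCoset.rel_iff] at hrel
    obtain ⟨k, hk, h, hh, rfl⟩ := hrel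
    rw [phi_mul_right hab _ _ hh]
    rcases mem_zpowers_sq hττ hk with rfl | rfl
    · rw [one_mul]
    · rw [hτ, phi_tau hab]
      exact (Quotient.sound (Or.inr rfl))
  let Ψ : DoubleCoset.Quotient (↑(Subgroup.zpowers τ)) (↑(Hprime p a b)) → Quotient sQ :=
    fun q => Quotient.liftOn' q (fun g => Quotient.mk sQ (phi hab g)) Fconst
  have hΨmk : ∀ g, Ψ (DoubleCoset.mk _ _ g) = Quotient.mk sQ (phi hab g) := fun g => rfl
  have hbij : Function.Bijective Ψ := by
    constructor
    · intro q q'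
      induction q using Quotient.inductionOn' with | h g => ?_
      induction q' using Quotient.inductionOn' with | h g' => ?_
      intro hqq
      rw [hΨmk, hΨmk] at hqq
      rcases Quotient.exact hqq with h | h
      · rw [DoubleCoset.eq]
        exact ⟨1, one_mem _, g⁻¹ * g', phi_eq_imp hab g g' h.symm, by group⟩
      · rw [DoubleCoset.eq]
        refine ⟨τ, Subgroup.mem_zpowers τ, (τ * g)⁻¹ * g',
          phi_eq_imp hab (τ * g) g' ?_, by group⟩
        rw [hτ, phi_tau hab]
        exact h.symm
    · intro q'
      induction q' using Quotient.inductionOn' with | h r => ?_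
      obtain ⟨σ, hσa, hσb⟩ := exists_perm hab r.2
      refine ⟨DoubleCoset.mk _ _ ((σ, 1) : Equiv.Perm (Fin p) × Multiplicative (ZMod 2)), ?_⟩
      rw [hΨmk]
      have hphi : phi hab ((σ, 1) : Equiv.Perm (Fin p) × Multiplicative (ZMod 2)) = r := by
        apply Subtype.ext
        simp only [phi, if_pos rfl]
        exact Prod.ext hσa hσb
      exact congrArg (Quotient.mk sQ) hphi
  rw [Nat.card_congr (Equiv.ofBijective Ψ hbij)]
  have hcount := card_quot_invol (pmap t) hinv
  rw [card_pairX p] at hcount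
  have hC2 := card_fixed (p := p) hxy
  rw [← hT] at hC2
  rw [hC2] at hcount
  rw [← hsQ] at hcount
  obtain ⟨m, rfl⟩ : ∃ m, p = m + 3 := ⟨p - 3, by omega⟩
  have e1 : (m + 3) * (m + 3) = m * m + 6 * m + 9 := by ring
  have e2 : (m + 3) ^ 2 = m * m + 6 * m + 9 := by ring
  have e3 : m + 3 - 2 = m + 1 := by omega
  rw [e3] at hcount
  have e4 : (m + 1) * (m + 1) = m * m + 2 * m + 1 := by ring
  omega
end

section
/- Let p be an odd prime, G = Sₚ × C₂, and let H' ≤ G be the subgroup generated by the elements (π, 0) for permutations π fixing p−1 and p, together with ((p−1 p), 1). Let τ = (t, 1) ∈ G where t ∈ Sₚ is a product of (p−3)/2 disjoint transpositions (the identity if p = 3) and 1 is the nontrivial element of C₂. Then the number of double cosets ⟨τ⟩\G/H' equals (p² − 3)/2. -/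
namespace DCaux

abbrev GG (p : ℕ) := Equiv.Perm (Fin p) × Multiplicative (ZMod 2)

abbrev XX (p : ℕ) := {q : Fin p × Fin p // q.1 ≠ q.2}

lemma two_cases (e : Multiplicative (ZMod 2)) : e = 1 ∨ e = Multiplicative.ofAdd 1 := by
  revert e; decide

lemma one_ne : ¬ ((1 : Multiplicative (ZMod 2)) = Multiplicative.ofAdd 1) := by decide

lemma mul_self_eq :
    (Multiplicative.ofAdd 1 : Multiplicative (ZMod 2)) * Multiplicative.ofAdd 1 = 1 := by decide

variable {p : ℕ}

instance : SMul (GG p) (XX p) where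
  smul g q := if g.2 = Multiplicative.ofAdd 1
    then ⟨(g.1 q.1.2, g.1 q.1.1), fun h => q.2 (g.1.injective h).symm⟩
    else ⟨(g.1 q.1.1, g.1 q.1.2), fun h => q.2 (g.1.injective h)⟩

lemma smul_def (g : GG p) (q : XX p) : g • q = if g.2 = Multiplicative.ofAdd 1
    then (⟨(g.1 q.1.2, g.1 q.1.1), fun h => q.2 (g.1.injective h).symm⟩ : XX p)
    else ⟨(g.1 q.1.1, g.1 q.1.2), fun h => q.2 (g.1.injective h)⟩ := rfl

instance : MulAction (GG p) (XX p) where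
  one_smul q := by
    rw [smul_def, if_neg (by rw [Prod.snd_one]; exact one_ne)]
    exact Subtype.ext rfl
  mul_smul g h q := by
    rcases two_cases g.2 with hg | hg <;> rcases two_cases h.2 with hh | hh <;>
      · simp only [smul_def, Prod.snd_mul, Prod.fst_mul, hg, hh, mul_one, one_mul, mul_self_eq,
          if_pos rfl, if_neg one_ne]
        exact Subtype.ext (by simp [Equiv.Perm.mul_apply])

lemma stab_eq (a b : Fin p) (hab : a ≠ b) :
    Hprime p a b = MulAction.stabilizer (GG p) (⟨(a, b), hab⟩ : XX p) := by
  apply le_antisymm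
  · rw [Hprime, Subgroup.closure_le]
    rintro g (⟨h1, h2, h3⟩ | rfl)
    · show g • (⟨(a, b), hab⟩ : XX p) = ⟨(a, b), hab⟩
      rw [smul_def, if_neg (by rw [h1]; exact one_ne)]
      exact Subtype.ext (Prod.ext h2 h3)
    · show ((Equiv.swap a b, Multiplicative.ofAdd 1) : GG p) • (⟨(a, b), hab⟩ : XX p)
        = ⟨(a, b), hab⟩
      rw [smul_def, if_pos rfl]
      exact Subtype.ext (by simp)
  · intro g hg
    have hg' : g • (⟨(a, b), hab⟩ : XX p) = ⟨(a, b), hab⟩ := hg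
    rcases two_cases g.2 with h2 | h2
    · rw [smul_def, if_neg (by rw [h2]; exact one_ne)] at hg'
      have hv := congrArg Subtype.val hg'
      exact Subgroup.subset_closure (Or.inl ⟨h2, congrArg Prod.fst hv, congrArg Prod.snd hv⟩)
    · rw [smul_def, if_pos h2] at hg'
      have hv := congrArg Subtype.val hg'
      have hb' : g.1 b = a := congrArg Prod.fst hv
      have ha' : g.1 a = b := congrArg Prod.snd hv
      have key : g = ((g.1 * Equiv.swap a b, 1) : GG p)
          * ((Equiv.swap a b, Multiplicative.ofAdd 1) : GG p) := by
        apply Prod.ext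
        · show g.1 = g.1 * Equiv.swap a b * Equiv.swap a b
          rw [mul_assoc, Equiv.swap_mul_self, mul_one]
        · show g.2 = 1 * Multiplicative.ofAdd 1
          rw [one_mul, h2]
      rw [key]
      refine mul_mem (Subgroup.subset_closure (Or.inl ⟨rfl, ?_, ?_⟩))
        (Subgroup.subset_closure (Or.inr rfl))
      · show g.1 (Equiv.swap a b a) = a
        rw [Equiv.swap_apply_left, hb']
      · show g.1 (Equiv.swap a b b) = b
        rw [Equiv.swap_apply_right, ha']

lemma exists_smul (a b : Fin p) (hab : a ≠ b) (q : XX p) :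
    ∃ g : GG p, g • (⟨(a, b), hab⟩ : XX p) = q := by
  obtain ⟨⟨x, y⟩, hxy⟩ := q
  have hxy' : x ≠ y := hxy
  have hcx : x ≠ Equiv.swap a x b := by
    intro h
    have := congrArg (Equiv.swap a x) h
    rw [Equiv.swap_apply_self, Equiv.swap_apply_right] at this
    exact hab this
  refine ⟨(Equiv.swap (Equiv.swap a x b) y * Equiv.swap a x, 1), ?_⟩
  rw [smul_def, if_neg one_ne]
  apply Subtype.ext
  refine Prod.ext ?_ ?_
  · show Equiv.swap (Equiv.swap a x b) y (Equiv.swap a x a) = x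
    rw [Equiv.swap_apply_left, Equiv.swap_apply_of_ne_of_ne hcx hxy']
  · show Equiv.swap (Equiv.swap a x b) y (Equiv.swap a x b) = y
    rw [Equiv.swap_apply_left]

end DCaux

/-- For `τ = (t, 1) ∈ G = Sₚ × C₂` with `t` a product of `(p−3)/2` disjoint transpositions
(the identity if `p = 3`) and `1` the nontrivial element of `C₂`, the number of double cosets
`⟨τ⟩\G/H'` is `(p² − 3)/2`. -/
theorem double_coset_count_middle (p : ℕ) (hp : p.Prime) (hodd : Odd p)
    (a b : Fin p) (ha : (a : ℕ) = p - 2) (hb : (b : ℕ) = p - 1)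
    (t : Equiv.Perm (Fin p))
    (ht : t.cycleType = Multiset.replicate ((p - 3) / 2) 2) :
    Nat.card (DoubleCoset.Quotient
        ((Subgroup.zpowers ((t, Multiplicative.ofAdd 1) :
            Equiv.Perm (Fin p) × Multiplicative (ZMod 2)) :
          Subgroup (Equiv.Perm (Fin p) × Multiplicative (ZMod 2))) :
            Set (Equiv.Perm (Fin p) × Multiplicative (ZMod 2)))
        ((Hprime p a b : Subgroup (Equiv.Perm (Fin p) × Multiplicative (ZMod 2))) :
            Set (Equiv.Perm (Fin p) × Multiplicative (ZMod 2))))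
      = (p ^ 2 - 3) / 2 := by
  open DCaux in
  classical
  have hp3 : 3 ≤ p := by
    rcases hodd with ⟨m, hm⟩
    have := hp.two_le
    omega
  have hab : a ≠ b := by
    intro h
    have := congrArg Fin.val h
    rw [ha, hb] at this
    omega
  set τ : GG p := (t, Multiplicative.ofAdd 1) with hτdef
  have htord : orderOf t ∣ 2 := by
    rw [← Equiv.Perm.lcm_cycleType, ht]
    exact Multiset.lcm_dvd.mpr fun x hx => by rw [Multiset.eq_of_mem_replicate hx]
  have ht2 : t ^ 2 = 1 := orderOf_dvd_iff_pow_eq_one.mp htord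
  have hτ2 : τ ^ 2 = 1 := by
    have : τ ^ 2 = ((1 : Equiv.Perm (Fin p)), (1 : Multiplicative (ZMod 2))) := by
      rw [hτdef, Prod.pow_mk, ht2,
        (by decide : (Multiplicative.ofAdd 1 : Multiplicative (ZMod 2)) ^ 2 = 1)]
    exact this
  have hτne : τ ≠ 1 := fun h => one_ne (congrArg Prod.snd h).symm
  haveI : Fact (Nat.Prime 2) := ⟨Nat.prime_two⟩
  have hord : orderOf τ = 2 := orderOf_eq_prime hτ2 hτne
  set A := Subgroup.zpowers τ with hAdef
  set x0 : XX p := ⟨(a, b), hab⟩ with hx0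
  have hstab : Hprime p a b = MulAction.stabilizer (GG p) x0 := stab_eq a b hab
  have memA : ∀ g : GG p, g ∈ A → g = 1 ∨ g = τ := by
    intro g hg
    obtain ⟨n, rfl⟩ := hg
    rcases Int.even_or_odd n with ⟨m, rfl⟩ | ⟨m, rfl⟩
    · left
      show τ ^ (m + m) = 1
      rw [show m + m = 2 * m by ring, zpow_mul,
        (by rw [zpow_two, ← pow_two]; exact hτ2 : τ ^ (2 : ℤ) = 1), one_zpow]
    · right
      show τ ^ (2 * m + 1) = τ
      rw [zpow_add, zpow_mul,
        (by rw [zpow_two, ← pow_two]; exact hτ2 : τ ^ (2 : ℤ) = 1), one_zpow, one_mul, zpow_one]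
  have htt : ∀ x, t (t x) = x := fun x => by
    rw [← Equiv.Perm.mul_apply, ← pow_two, ht2, Equiv.Perm.one_apply]
  -- the equivalence with the orbit quotient
  have e : DoubleCoset.Quotient (A : Set (GG p)) ((Hprime p a b : Subgroup (GG p)) : Set (GG p))
      ≃ Quotient (MulAction.orbitRel ↥A (XX p)) := by
    refine Equiv.ofBijective
      (fun q => Quotient.liftOn' q (fun g => Quotient.mk'' (g • x0)) ?_) ⟨?_, ?_⟩
    · intro g g' hrel
      obtain ⟨α, hα, k, hk, rfl⟩ := DoubleCoset.rel_iff.mp hrel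
      have hk' : k • x0 = x0 := by
        rw [hstab] at hk
        exact hk
      apply Quotient.sound'
      rw [MulAction.orbitRel_apply]
      have hcalc : (α * g * k) • x0 = α • (g • x0) := by
        rw [mul_smul, mul_smul, hk']
      rw [hcalc]
      exact ⟨(⟨α, hα⟩ : ↥A)⁻¹, by
        show (α⁻¹ : GG p) • (α • (g • x0)) = g • x0
        rw [inv_smul_smul]⟩
    · intro q q'
      refine Quotient.inductionOn₂' q q' fun g g' hEq => ?_
      have hrel := Quotient.exact' hEq
      rw [MulAction.orbitRel_apply] at hrel
      obtain ⟨⟨α, hα⟩, hEq2⟩ := hrel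
      have hEq2' : α • (g' • x0) = g • x0 := hEq2
      have hk : (g⁻¹ * (α * g')) • x0 = x0 := by
        rw [mul_smul, mul_smul, hEq2', inv_smul_smul]
      apply Quotient.sound'
      rw [DoubleCoset.rel_iff]
      refine ⟨α⁻¹, A.inv_mem hα, g⁻¹ * (α * g'), ?_, by group⟩
      rw [hstab]
      exact hk
    · intro q
      refine Quotient.inductionOn' q fun x => ?_
      obtain ⟨g, hg⟩ := exists_smul a b hab x
      exact ⟨Quotient.mk'' g, by
        show Quotient.mk'' (g • x0) = Quotient.mk'' x
        rw [hg]⟩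
  haveI : Fintype ↥A := Fintype.ofFinite _
  haveI : ∀ a : ↥A, Fintype (MulAction.fixedBy (XX p) a) := fun a => Fintype.ofFinite _
  haveI : Fintype (Quotient (MulAction.orbitRel ↥A (XX p))) := Fintype.ofFinite _
  have burn := MulAction.sum_card_fixedBy_eq_card_orbits_mul_card_group ↥A (XX p)
  have hτA : τ ∈ A := Subgroup.mem_zpowers τ
  have h1A : (1 : GG p) ∈ A := A.one_mem
  have hne : (⟨1, h1A⟩ : ↥A) ≠ ⟨τ, hτA⟩ := fun h => hτne (congrArg Subtype.val h).symm
  have huniv : (Finset.univ : Finset ↥A) = {⟨1, h1A⟩, ⟨τ, hτA⟩} := by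
    ext x
    simp only [Finset.mem_univ, true_iff, Finset.mem_insert, Finset.mem_singleton]
    rcases memA x.1 x.2 with h | h
    · exact Or.inl (Subtype.ext h)
    · exact Or.inr (Subtype.ext h)
  have cX : Fintype.card (XX p) = p * p - p := by
    have e' : XX p ≃ {q : Fin p × Fin p // ¬(q.1 = q.2)} :=
      Equiv.subtypeEquivRight fun _ => Iff.rfl
    have hdiag : Fintype.card {q : Fin p × Fin p // q.1 = q.2} = p :=
      (Fintype.card_congr ⟨fun q => q.1.1, fun x => ⟨(x, x), rfl⟩,
        fun q => Subtype.ext (Prod.ext rfl q.2), fun x => rfl⟩).trans (Fintype.card_fin p)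
    rw [Fintype.card_congr e', Fintype.card_subtype_compl, hdiag, Fintype.card_prod,
      Fintype.card_fin]
  have c1 : Fintype.card (MulAction.fixedBy (XX p) (⟨1, h1A⟩ : ↥A)) = p * p - p := by
    rw [← cX]
    exact Fintype.card_congr (Equiv.subtypeUnivEquiv fun x => one_smul _ x)
  have hfix : ∀ q : XX p, ((⟨τ, hτA⟩ : ↥A) • q = q) ↔ q.1.2 = t q.1.1 := by
    intro q
    constructor
    · intro h
      have h' : τ • q = q := h
      rw [smul_def, if_pos rfl] at h'
      exact (congrArg (fun z => (Subtype.val z).2) h').symm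
    · intro h
      show τ • q = q
      rw [smul_def, if_pos rfl]
      apply Subtype.ext
      refine Prod.ext ?_ ?_
      · show t q.1.2 = q.1.1
        rw [h, htt]
      · show t q.1.1 = q.1.2
        rw [h]
  have eτ : (MulAction.fixedBy (XX p) (⟨τ, hτA⟩ : ↥A)) ≃ {x : Fin p // t x ≠ x} :=
    { toFun := fun q => ⟨q.1.1.1, fun h => q.1.2 (((hfix q.1).mp q.2).trans h).symm⟩
      invFun := fun x => ⟨⟨(x.1, t x.1), fun h => x.2 h.symm⟩, (hfix _).mpr rfl⟩
      left_inv := fun q => Subtype.ext (Subtype.ext (Prod.ext rfl ((hfix q.1).mp q.2).symm))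
      right_inv := fun x => rfl }
  have c2 : Fintype.card (MulAction.fixedBy (XX p) (⟨τ, hτA⟩ : ↥A)) = 2 * ((p - 3) / 2) := by
    rw [Fintype.card_congr eτ]
    have hsupp : Fintype.card {x : Fin p // t x ≠ x} = t.support.card := by
      rw [Fintype.card_subtype]
      congr 1
    rw [hsupp, ← Equiv.Perm.sum_cycleType, ht, Multiset.sum_replicate, smul_eq_mul, mul_comm]
  have cardA : Fintype.card ↥A = 2 := by
    rw [← Nat.card_eq_fintype_card, Nat.card_zpowers, hord]
  rw [huniv, Finset.sum_pair hne, c1, c2, cardA] at burn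
  rw [Nat.card_congr e, Nat.card_eq_fintype_card]
  have hpp : p ≤ p * p := Nat.le_mul_of_pos_left p (by omega)
  have hodd2 : p % 2 = 1 := Nat.odd_iff.mp hodd
  rw [pow_two]
  omega
end

section
/- Let p be an odd prime and G = Sₚ × C₂. Let V be the representation of G on {x ∈ ℚᵖ : x₁ + ⋯ + x_p = 0} given by (ρ, c)·x = (−1)ᶜ·(x_{ρ⁻¹(1)}, …, x_{ρ⁻¹(p)}). Then there is an isomorphism of ℚ[G]-modules ℚ[G/(Stab(1)×{0})] ⊕ ℚ[G/G] ≅ ℚ[G/(Sₚ×{0})] ⊕ ℚ[G/(Stab(1)×C₂)] ⊕ V, where Stab(1) = {ρ ∈ Sₚ : ρ(1) = 1}. (Equivalently, Ind_{S_{p−1}×{e}}^G 1 ≅ 1 ⊕ ε ⊕ σ ⊕ (σ⊗ε), where Ind_{Sₚ×{e}}^G 1 ≅ 1 ⊕ ε and Ind_{S_{p−1}×C₂}^G 1 ≅ 1 ⊕ σ.) -/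
/-- The zero-sum hyperplane `{x ∈ ℚᵖ : x₁ + ⋯ + x_p = 0}`. -/
def zeroSumHyperplane (p : ℕ) : Submodule ℚ (Fin p → ℚ) where
  carrier := {x | ∑ i, x i = 0}
  add_mem' := fun {a b} ha hb => by
    simp only [Set.mem_setOf_eq, Pi.add_apply] at ha hb ⊢
    simp [Finset.sum_add_distrib, ha, hb]
  zero_mem' := by simp
  smul_mem' := fun c x hx => by
    simp only [Set.mem_setOf_eq, Pi.smul_apply, smul_eq_mul] at hx ⊢
    simp [← Finset.mul_sum, hx]

/-- The permutation representation on `H →₀ k` (Mathlib's old `Representation.ofMulAction`). -/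
noncomputable def ofMulActionFinsupp (k G H : Type*) [CommSemiring k] [Monoid G] [MulAction G H] :
    Representation k G (H →₀ k) where
  toFun g := Finsupp.lmapDomain k k (g • ·)
  map_one' := by ext; simp
  map_mul' x y := by ext; simp [mul_smul]

namespace SpC2Aux

abbrev C2 := Multiplicative (ZMod 2)

lemma ofMulActionFinsupp_def {k G H : Type*} [CommSemiring k] [Monoid G] [MulAction G H]
    (g : G) : ofMulActionFinsupp k G H g = Finsupp.lmapDomain k k (g • ·) := rfl

def c1 : C2 := Multiplicative.ofAdd 1

lemma C2.cases (d : C2) : d = 1 ∨ d = c1 := by revert d; decide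

lemma C2Sign_one : C2Sign 1 = 1 := rfl

lemma C2Sign_c1 : C2Sign c1 = -1 := by
  have : (Multiplicative.toAdd c1).val = 1 := rfl
  rw [C2Sign, this, pow_one]

lemma c1_mul_c1 : c1 * c1 = 1 := by decide

lemma C2.inv_eq (d : C2) : d⁻¹ = d := by
  rcases C2.cases d with h | h <;> subst h <;> decide

lemma C2Sign_mul (c d : C2) : C2Sign (c * d) = C2Sign c * C2Sign d := by
  rcases C2.cases c with h | h <;> rcases C2.cases d with h' | h' <;> subst h <;> subst h' <;>
    simp [C2Sign_one, C2Sign_c1, c1_mul_c1]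
abbrev Gp (p : ℕ) := Equiv.Perm (Fin p) × C2

variable {p : ℕ}

abbrev A3 (z : Fin p) : Subgroup (Gp p) :=
  (MulAction.stabilizer (Equiv.Perm (Fin p)) z).prod (⊥ : Subgroup C2)
abbrev A2 (z : Fin p) : Subgroup (Gp p) :=
  (MulAction.stabilizer (Equiv.Perm (Fin p)) z).prod (⊤ : Subgroup C2)
abbrev A1 (p : ℕ) : Subgroup (Gp p) :=
  (⊤ : Subgroup (Equiv.Perm (Fin p))).prod (⊥ : Subgroup C2)

/-- The equiv `G⧸A₃ ≃ Fin p × C₂`. -/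
def X3equiv (z : Fin p) : (Gp p ⧸ A3 z) ≃ Fin p × C2 where
  toFun := Quotient.lift (fun g : Gp p => (g.1 z, g.2)) (by
    intro a b hab
    have h := QuotientGroup.leftRel_apply.mp hab
    obtain ⟨h1, h2⟩ := Subgroup.mem_prod.mp h
    have h2' : b.2 = a.2 := by
      have : a.2⁻¹ * b.2 = 1 := h2
      rw [inv_mul_eq_one] at this; exact this.symm
    have h1' : (a.1⁻¹ * b.1) z = z := h1
    have : b.1 z = a.1 z := by
      have := congrArg a.1 h1'
      simpa [Equiv.Perm.mul_apply] using this
    simp [this, h2'])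
  invFun x := QuotientGroup.mk (Equiv.swap z x.1, x.2)
  left_inv := by
    intro q
    induction q using Quotient.inductionOn with
    | h g =>
      show QuotientGroup.mk _ = QuotientGroup.mk g
      rw [QuotientGroup.eq]
      refine Subgroup.mem_prod.mpr ⟨?_, ?_⟩
      · show ((Equiv.swap z (g.1 z), g.2)⁻¹ * g).1 • z = z
        simp [Equiv.Perm.smul_def, Equiv.Perm.mul_apply]
      · show ((Equiv.swap z (g.1 z), g.2)⁻¹ * g).2 ∈ (⊥ : Subgroup C2)
        simp
  right_inv := by
    intro x
    show (Equiv.swap z x.1 z, x.2) = x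
    simp

lemma X3equiv_smul (z : Fin p) (g : Gp p) (q : Gp p ⧸ A3 z) :
    X3equiv z (g • q) = (g.1 ((X3equiv z q).1), g.2 * (X3equiv z q).2) := by
  induction q using Quotient.inductionOn with
  | h h =>
    show X3equiv z (QuotientGroup.mk (g * h)) = _
    rfl

lemma X3equiv_symm_smul (z : Fin p) (g : Gp p) (y : Fin p × C2) :
    (X3equiv z).symm (g.1 y.1, g.2 * y.2) = g • (X3equiv z).symm y := by
  apply (X3equiv z).injective
  rw [Equiv.apply_symm_apply, X3equiv_smul, Equiv.apply_symm_apply]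

/-- The equiv `G⧸A₂ ≃ Fin p`. -/
def X2equiv (z : Fin p) : (Gp p ⧸ A2 z) ≃ Fin p where
  toFun := Quotient.lift (fun g : Gp p => g.1 z) (by
    intro a b hab
    have h := QuotientGroup.leftRel_apply.mp hab
    obtain ⟨h1, _⟩ := Subgroup.mem_prod.mp h
    have h1' : (a.1⁻¹ * b.1) z = z := h1
    have := congrArg a.1 h1'
    have : b.1 z = a.1 z := by simpa [Equiv.Perm.mul_apply] using this
    exact this.symm)
  invFun i := QuotientGroup.mk (Equiv.swap z i, 1)
  left_inv := by
    intro q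
    induction q using Quotient.inductionOn with
    | h g =>
      show QuotientGroup.mk _ = QuotientGroup.mk g
      rw [QuotientGroup.eq]
      refine Subgroup.mem_prod.mpr ⟨?_, trivial⟩
      show ((Equiv.swap z (g.1 z), (1:C2))⁻¹ * g).1 • z = z
      simp [Equiv.Perm.smul_def, Equiv.Perm.mul_apply]
  right_inv := by
    intro x
    show Equiv.swap z x z = x
    simp

lemma X2equiv_smul (z : Fin p) (g : Gp p) (q : Gp p ⧸ A2 z) :
    X2equiv z (g • q) = g.1 (X2equiv z q) := by
  induction q using Quotient.inductionOn with
  | h h => rfl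

lemma X2equiv_symm_smul (z : Fin p) (g : Gp p) (y : Fin p) :
    (X2equiv z).symm (g.1 y) = g • (X2equiv z).symm y := by
  apply (X2equiv z).injective
  rw [Equiv.apply_symm_apply, X2equiv_smul, Equiv.apply_symm_apply]

/-- The equiv `G⧸A₁ ≃ C₂`. -/
def X1equiv (p : ℕ) : (Gp p ⧸ A1 p) ≃ C2 where
  toFun := Quotient.lift (fun g : Gp p => g.2) (by
    intro a b hab
    have h := QuotientGroup.leftRel_apply.mp hab
    obtain ⟨_, h2⟩ := Subgroup.mem_prod.mp h
    have : a.2⁻¹ * b.2 = 1 := h2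
    rw [inv_mul_eq_one] at this; exact this)
  invFun c := QuotientGroup.mk (1, c)
  left_inv := by
    intro q
    induction q using Quotient.inductionOn with
    | h g =>
      show QuotientGroup.mk _ = QuotientGroup.mk g
      rw [QuotientGroup.eq]
      exact Subgroup.mem_prod.mpr ⟨trivial, by simp⟩
  right_inv := fun x => rfl

lemma X1equiv_smul (g : Gp p) (q : Gp p ⧸ A1 p) :
    X1equiv p (g • q) = g.2 * X1equiv p q := by
  induction q using Quotient.inductionOn with
  | h h => rfl

lemma X1equiv_symm_smul (g : Gp p) (y : C2) :
    (X1equiv p).symm (g.2 * y) = g • (X1equiv p).symm y := by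
  apply (X1equiv p).injective
  rw [Equiv.apply_symm_apply, X1equiv_smul, Equiv.apply_symm_apply]

noncomputable def coord3 (z : Fin p) : ((Gp p ⧸ A3 z) →₀ ℚ) ≃ₗ[ℚ] (Fin p × C2 → ℚ) :=
  (Finsupp.domLCongr (X3equiv z)).trans (Finsupp.linearEquivFunOnFinite ℚ ℚ _)

noncomputable def coord2 (z : Fin p) : ((Gp p ⧸ A2 z) →₀ ℚ) ≃ₗ[ℚ] (Fin p → ℚ) :=
  (Finsupp.domLCongr (X2equiv z)).trans (Finsupp.linearEquivFunOnFinite ℚ ℚ _)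

noncomputable def coord1 (p : ℕ) : ((Gp p ⧸ A1 p) →₀ ℚ) ≃ₗ[ℚ] (C2 → ℚ) :=
  (Finsupp.domLCongr (X1equiv p)).trans (Finsupp.linearEquivFunOnFinite ℚ ℚ _)

lemma coord3_apply (z : Fin p) (v : (Gp p ⧸ A3 z) →₀ ℚ) (y : Fin p × C2) :
    coord3 z v y = v ((X3equiv z).symm y) := by
  simp [coord3, Finsupp.domLCongr_apply, Finsupp.linearEquivFunOnFinite,
    Finsupp.equivMapDomain_apply]
  exact Finsupp.equivMapDomain_apply _ _ _

lemma coord2_apply (z : Fin p) (v : (Gp p ⧸ A2 z) →₀ ℚ) (y : Fin p) :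
    coord2 z v y = v ((X2equiv z).symm y) := by
  simp [coord2, Finsupp.domLCongr_apply, Finsupp.linearEquivFunOnFinite,
    Finsupp.equivMapDomain_apply]
  exact Finsupp.equivMapDomain_apply _ _ _

lemma coord1_apply (v : (Gp p ⧸ A1 p) →₀ ℚ) (y : C2) :
    coord1 p v y = v ((X1equiv p).symm y) := by
  simp [coord1, Finsupp.domLCongr_apply, Finsupp.linearEquivFunOnFinite,
    Finsupp.equivMapDomain_apply]
  exact Finsupp.equivMapDomain_apply _ _ _

lemma coord3_ofMulAction (z : Fin p) (g : Gp p) (v : (Gp p ⧸ A3 z) →₀ ℚ) :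
    coord3 z (ofMulActionFinsupp ℚ (Gp p) (Gp p ⧸ A3 z) g v) =
      fun y => coord3 z v (g.1⁻¹ y.1, g.2⁻¹ * y.2) := by
  funext y
  rw [coord3_apply, coord3_apply, ofMulActionFinsupp_def, Finsupp.lmapDomain_apply]
  have h1 : (X3equiv z).symm (g.1⁻¹ y.1, g.2⁻¹ * y.2) = g⁻¹ • (X3equiv z).symm y := by
    simpa using X3equiv_symm_smul z g⁻¹ y
  rw [h1]
  have h2 : (X3equiv z).symm y = g • (g⁻¹ • (X3equiv z).symm y) := (smul_inv_smul g _).symm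
  rw [h2, Finsupp.mapDomain_apply (MulAction.injective g)]
  simp

lemma coord2_ofMulAction (z : Fin p) (g : Gp p) (v : (Gp p ⧸ A2 z) →₀ ℚ) :
    coord2 z (ofMulActionFinsupp ℚ (Gp p) (Gp p ⧸ A2 z) g v) =
      fun y => coord2 z v (g.1⁻¹ y) := by
  funext y
  rw [coord2_apply, coord2_apply, ofMulActionFinsupp_def, Finsupp.lmapDomain_apply]
  have h1 : (X2equiv z).symm (g.1⁻¹ y) = g⁻¹ • (X2equiv z).symm y := by
    simpa using X2equiv_symm_smul z g⁻¹ y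
  rw [h1]
  have h2 : (X2equiv z).symm y = g • (g⁻¹ • (X2equiv z).symm y) := (smul_inv_smul g _).symm
  rw [h2, Finsupp.mapDomain_apply (MulAction.injective g)]
  simp

lemma coord1_ofMulAction (g : Gp p) (v : (Gp p ⧸ A1 p) →₀ ℚ) :
    coord1 p (ofMulActionFinsupp ℚ (Gp p) (Gp p ⧸ A1 p) g v) =
      fun y => coord1 p v (g.2⁻¹ * y) := by
  funext y
  rw [coord1_apply, coord1_apply, ofMulActionFinsupp_def, Finsupp.lmapDomain_apply]
  have h1 : (X1equiv p).symm (g.2⁻¹ * y) = g⁻¹ • (X1equiv p).symm y := by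
    simpa using X1equiv_symm_smul g⁻¹ y
  rw [h1]
  have h2 : (X1equiv p).symm y = g • (g⁻¹ • (X1equiv p).symm y) := (smul_inv_smul g _).symm
  rw [h2, Finsupp.mapDomain_apply (MulAction.injective g)]
  simp

instance : Subsingleton (Gp p ⧸ (⊤ : Subgroup (Gp p))) :=
  QuotientGroup.subsingleton_quotient_top

noncomputable instance : Unique (Gp p ⧸ (⊤ : Subgroup (Gp p))) :=
  Unique.mk' _

noncomputable def coordG (p : ℕ) : ((Gp p ⧸ (⊤ : Subgroup (Gp p))) →₀ ℚ) ≃ₗ[ℚ] ℚ :=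
  Finsupp.LinearEquiv.finsuppUnique ℚ ℚ _

lemma coordG_ofMulAction (g : Gp p) (v : (Gp p ⧸ (⊤ : Subgroup (Gp p))) →₀ ℚ) :
    coordG p (ofMulActionFinsupp ℚ (Gp p) (Gp p ⧸ (⊤ : Subgroup (Gp p))) g v) =
      coordG p v := by
  have : (fun x : Gp p ⧸ (⊤ : Subgroup (Gp p)) => g • x) = id :=
    funext fun x => Subsingleton.elim _ _
  rw [ofMulActionFinsupp_def, Finsupp.lmapDomain_apply]
  show coordG p (Finsupp.mapDomain (fun x => g • x) v) = _
  rw [this, Finsupp.mapDomain_id]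

/-- The `ε`-isotypic average of a function on `Fin p × C₂`. -/
noncomputable def mval (p : ℕ) (a : Fin p × C2 → ℚ) : ℚ :=
  (∑ i, (a (i, 1) - a (i, c1))) / p

lemma mval_add (a b : Fin p × C2 → ℚ) : mval p (a + b) = mval p a + mval p b := by
  unfold mval
  rw [← add_div, ← Finset.sum_add_distrib]
  congr 1
  refine Finset.sum_congr rfl fun i _ => ?_
  simp only [Pi.add_apply]; ring

lemma mval_smul (r : ℚ) (a : Fin p × C2 → ℚ) : mval p (r • a) = r * mval p a := by
  unfold mval
  rw [← mul_div_assoc, Finset.mul_sum]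
  congr 1
  refine Finset.sum_congr rfl fun i _ => ?_
  simp only [Pi.smul_apply, smul_eq_mul]; ring

lemma mem_zeroSum {q : ℕ} (x : Fin q → ℚ) (h : ∑ i, x i = 0) : x ∈ zeroSumHyperplane q := h

lemma sum_sub_mval (hp : (p : ℚ) ≠ 0) (a : Fin p × C2 → ℚ) :
    ∑ i, ((a (i, 1) - a (i, c1)) - mval p a) = 0 := by
  rw [Finset.sum_sub_distrib, Finset.sum_const, Finset.card_univ, Fintype.card_fin,
    nsmul_eq_mul, mval]
  field_simp
  ring

/-- The middle linear equivalence in explicit coordinates. -/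
noncomputable def Emid (hp : (p : ℚ) ≠ 0) :
    ((Fin p × C2 → ℚ) × ℚ) ≃ₗ[ℚ] ((C2 → ℚ) × (Fin p → ℚ) × zeroSumHyperplane p) where
  toFun x :=
    (fun d => x.2 + C2Sign d * mval p x.1,
     fun i => x.1 (i, 1) + x.1 (i, c1),
     ⟨fun i => (x.1 (i, 1) - x.1 (i, c1)) - mval p x.1, sum_sub_mval hp x.1⟩)
  map_add' x y := by
    refine Prod.ext ?_ (Prod.ext ?_ (Subtype.ext ?_)) <;>
      funext q <;> simp only [Prod.fst_add, Prod.snd_add, Prod.smul_fst, Prod.smul_snd, Pi.add_apply, Pi.smul_apply, smul_eq_mul, Submodule.coe_add, Submodule.coe_smul, mval_add, mval_smul, RingHom.id_apply, C2Sign_one, C2Sign_c1] <;> ring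
  map_smul' r x := by
    refine Prod.ext ?_ (Prod.ext ?_ (Subtype.ext ?_)) <;>
      funext q <;> simp only [Prod.fst_add, Prod.snd_add, Prod.smul_fst, Prod.smul_snd, Pi.add_apply, Pi.smul_apply, smul_eq_mul, Submodule.coe_add, Submodule.coe_smul, mval_add, mval_smul, RingHom.id_apply, C2Sign_one, C2Sign_c1] <;> ring
  invFun y :=
    (fun q => (y.2.1 q.1 + C2Sign q.2 * (((y.2.2 : Fin p → ℚ)) q.1 + (y.1 1 - y.1 c1) / 2)) / 2,
     (y.1 1 + y.1 c1) / 2)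
  left_inv x := by
    obtain ⟨a, t⟩ := x
    refine Prod.ext ?_ ?_
    · funext q
      obtain ⟨i, d⟩ := q
      rcases C2.cases d with h | h <;> subst h <;>
        simp only [C2Sign_one, C2Sign_c1] <;> ring
    · show (_ + _) / 2 = t
      simp only [C2Sign_one, C2Sign_c1]; ring
  right_inv y := by
    obtain ⟨b, u, w, hw⟩ := y
    have hw' : ∑ i, w i = 0 := hw
    have hm : mval p (fun q : Fin p × C2 =>
        (u q.1 + C2Sign q.2 * (w q.1 + (b 1 - b c1) / 2)) / 2) = (b 1 - b c1) / 2 := by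
      unfold mval
      have : ∀ i : Fin p,
          ((u i + C2Sign (1:C2) * (w i + (b 1 - b c1) / 2)) / 2 -
            (u i + C2Sign c1 * (w i + (b 1 - b c1) / 2)) / 2)
            = w i + (b 1 - b c1) / 2 := by
        intro i; simp only [C2Sign_one, C2Sign_c1]; ring
      rw [Finset.sum_congr rfl fun i _ => this i, Finset.sum_add_distrib, hw',
        Finset.sum_const, Finset.card_univ, Fintype.card_fin, nsmul_eq_mul]
      field_simp
      ring
    refine Prod.ext ?_ (Prod.ext ?_ (Subtype.ext ?_))
    · funext d
      show (b 1 + b c1) / 2 + C2Sign d * _ = b d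
      rw [hm]
      rcases C2.cases d with h | h <;> subst h <;>
        simp only [C2Sign_one, C2Sign_c1] <;> ring
    · funext i
      show (_ + _) / 2 + (_ + _) / 2 = u i
      simp only [C2Sign_one, C2Sign_c1]; ring
    · show (fun i => _ - mval p _) = w
      funext i
      rw [hm]
      show (u i + C2Sign 1 * (w i + (b 1 - b c1)/2)) / 2 -
        (u i + C2Sign c1 * (w i + (b 1 - b c1)/2)) / 2 - (b 1 - b c1)/2 = w i
      simp only [C2Sign_one, C2Sign_c1]; ring

lemma Emid_fst (hp : (p : ℚ) ≠ 0) (x : (Fin p × C2 → ℚ) × ℚ) (d : C2) :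
    (Emid hp x).1 d = x.2 + C2Sign d * mval p x.1 := rfl

lemma Emid_snd_fst (hp : (p : ℚ) ≠ 0) (x : (Fin p × C2 → ℚ) × ℚ) (i : Fin p) :
    (Emid hp x).2.1 i = x.1 (i, 1) + x.1 (i, c1) := rfl

lemma Emid_snd_snd (hp : (p : ℚ) ≠ 0) (x : (Fin p × C2 → ℚ) × ℚ) (i : Fin p) :
    ((Emid hp x).2.2 : Fin p → ℚ) i = (x.1 (i, 1) - x.1 (i, c1)) - mval p x.1 := rfl

lemma sum_shift (c : C2) (f : C2 → ℚ) : f (c⁻¹ * 1) + f (c⁻¹ * c1) = f 1 + f c1 := by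
  rcases C2.cases c with h | h <;> subst h <;>
    simp [C2.inv_eq, c1_mul_c1] <;> ring

lemma diff_shift (c : C2) (f : C2 → ℚ) :
    f (c⁻¹ * 1) - f (c⁻¹ * c1) = C2Sign c * (f 1 - f c1) := by
  rcases C2.cases c with h | h <;> subst h <;>
    simp [C2.inv_eq, c1_mul_c1, C2Sign_one, C2Sign_c1] <;> ring

lemma mval_shift (g : Gp p) (a : Fin p × C2 → ℚ) :
    mval p (fun y : Fin p × C2 => a (g.1⁻¹ y.1, g.2⁻¹ * y.2)) = C2Sign g.2 * mval p a := by
  unfold mval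
  have key : ∑ i : Fin p, (a (g.1⁻¹ i, g.2⁻¹ * 1) - a (g.1⁻¹ i, g.2⁻¹ * c1))
      = C2Sign g.2 * ∑ i : Fin p, (a (i, 1) - a (i, c1)) := by
    have h1 : ∀ i : Fin p, a (g.1⁻¹ i, g.2⁻¹ * 1) - a (g.1⁻¹ i, g.2⁻¹ * c1)
        = C2Sign g.2 * (a (g.1⁻¹ i, 1) - a (g.1⁻¹ i, c1)) :=
      fun i => diff_shift g.2 (fun d => a (g.1⁻¹ i, d))
    rw [Finset.sum_congr rfl fun i _ => h1 i, ← Finset.mul_sum]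
    congr 1
    exact Equiv.sum_comp g.1⁻¹ (fun j => a (j, 1) - a (j, c1))
  rw [key, mul_div_assoc]

end SpC2Aux

open SpC2Aux in
/-- For `G = Sₚ × C₂`, with `A₁ = Sₚ×{0}`, `A₂ = Stab(1)×C₂`, `A₃ = Stab(1)×{0}` and `V` the
zero-sum hyperplane of `ℚᵖ` with action `(ρ,c)·x = (−1)ᶜ·(x∘ρ⁻¹)` (realizing `σ⊗ε`), there is
an isomorphism of `ℚ[G]`-modules `ℚ[G/A₃] ⊕ ℚ[G/G] ≅ ℚ[G/A₁] ⊕ ℚ[G/A₂] ⊕ V`. -/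
theorem induced_rep_decomposition_Sp_times_C2 (p : ℕ) (hp : p.Prime) (hodd : Odd p)
    (z : Fin p) (hz : (z : ℕ) = 0) :
    ∃ e : ((((Equiv.Perm (Fin p) × Multiplicative (ZMod 2)) ⧸
              (MulAction.stabilizer (Equiv.Perm (Fin p)) z).prod
                (⊥ : Subgroup (Multiplicative (ZMod 2)))) →₀ ℚ) ×
            (((Equiv.Perm (Fin p) × Multiplicative (ZMod 2)) ⧸
              (⊤ : Subgroup (Equiv.Perm (Fin p) × Multiplicative (ZMod 2)))) →₀ ℚ)) ≃ₗ[ℚ]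
          ((((Equiv.Perm (Fin p) × Multiplicative (ZMod 2)) ⧸
              (⊤ : Subgroup (Equiv.Perm (Fin p))).prod
                (⊥ : Subgroup (Multiplicative (ZMod 2)))) →₀ ℚ) ×
            (((Equiv.Perm (Fin p) × Multiplicative (ZMod 2)) ⧸
              (MulAction.stabilizer (Equiv.Perm (Fin p)) z).prod
                (⊤ : Subgroup (Multiplicative (ZMod 2)))) →₀ ℚ) ×
            zeroSumHyperplane p),
      ∀ (g : Equiv.Perm (Fin p) × Multiplicative (ZMod 2)) v,
        (e (ofMulActionFinsupp ℚ (Equiv.Perm (Fin p) × Multiplicative (ZMod 2))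
              ((Equiv.Perm (Fin p) × Multiplicative (ZMod 2)) ⧸
                (MulAction.stabilizer (Equiv.Perm (Fin p)) z).prod
                  (⊥ : Subgroup (Multiplicative (ZMod 2)))) g v.1,
            ofMulActionFinsupp ℚ (Equiv.Perm (Fin p) × Multiplicative (ZMod 2))
              ((Equiv.Perm (Fin p) × Multiplicative (ZMod 2)) ⧸
                (⊤ : Subgroup (Equiv.Perm (Fin p) × Multiplicative (ZMod 2)))) g v.2)).1 =
          ofMulActionFinsupp ℚ (Equiv.Perm (Fin p) × Multiplicative (ZMod 2))
             ((Equiv.Perm (Fin p) × Multiplicative (ZMod 2)) ⧸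
               (⊤ : Subgroup (Equiv.Perm (Fin p))).prod
                 (⊥ : Subgroup (Multiplicative (ZMod 2)))) g (e v).1 ∧
        (e (ofMulActionFinsupp ℚ (Equiv.Perm (Fin p) × Multiplicative (ZMod 2))
              ((Equiv.Perm (Fin p) × Multiplicative (ZMod 2)) ⧸
                (MulAction.stabilizer (Equiv.Perm (Fin p)) z).prod
                  (⊥ : Subgroup (Multiplicative (ZMod 2)))) g v.1,
            ofMulActionFinsupp ℚ (Equiv.Perm (Fin p) × Multiplicative (ZMod 2))
              ((Equiv.Perm (Fin p) × Multiplicative (ZMod 2)) ⧸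
                (⊤ : Subgroup (Equiv.Perm (Fin p) × Multiplicative (ZMod 2)))) g v.2)).2.1 =
          ofMulActionFinsupp ℚ (Equiv.Perm (Fin p) × Multiplicative (ZMod 2))
             ((Equiv.Perm (Fin p) × Multiplicative (ZMod 2)) ⧸
               (MulAction.stabilizer (Equiv.Perm (Fin p)) z).prod
                 (⊤ : Subgroup (Multiplicative (ZMod 2)))) g (e v).2.1 ∧
        (((e (ofMulActionFinsupp ℚ (Equiv.Perm (Fin p) × Multiplicative (ZMod 2))
              ((Equiv.Perm (Fin p) × Multiplicative (ZMod 2)) ⧸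
                (MulAction.stabilizer (Equiv.Perm (Fin p)) z).prod
                  (⊥ : Subgroup (Multiplicative (ZMod 2)))) g v.1,
            ofMulActionFinsupp ℚ (Equiv.Perm (Fin p) × Multiplicative (ZMod 2))
              ((Equiv.Perm (Fin p) × Multiplicative (ZMod 2)) ⧸
                (⊤ : Subgroup (Equiv.Perm (Fin p) × Multiplicative (ZMod 2)))) g v.2)).2.2 :
            Fin p → ℚ) =
          fun i => C2Sign g.2 * ((e v).2.2 : Fin p → ℚ) (g.1⁻¹ i)) := by
  classical
  have hp0 : (p : ℚ) ≠ 0 := Nat.cast_ne_zero.mpr hp.ne_zero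
  refine ⟨((coord3 z).prodCongr (coordG p)).trans ((Emid hp0).trans
    (((coord1 p).symm).prodCongr (((coord2 z).symm).prodCongr
      (LinearEquiv.refl ℚ (zeroSumHyperplane p))))), fun g v => ?_⟩
  simp only [LinearEquiv.trans_apply, LinearEquiv.prodCongr_apply, LinearEquiv.refl_apply]
  rw [coord3_ofMulAction, coordG_ofMulAction]
  set a : Fin p × C2 → ℚ := coord3 z v.1 with ha
  set t : ℚ := coordG p v.2 with htdef
  refine ⟨?_, ?_, ?_⟩
  · apply (coord1 p).injective
    rw [LinearEquiv.apply_symm_apply, coord1_ofMulAction, LinearEquiv.apply_symm_apply]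
    funext d
    rw [Emid_fst, Emid_fst, mval_shift g a, C2Sign_mul, C2.inv_eq]
    ring
  · apply (coord2 z).injective
    rw [LinearEquiv.apply_symm_apply, coord2_ofMulAction, LinearEquiv.apply_symm_apply]
    funext i
    rw [Emid_snd_fst, Emid_snd_fst]
    exact sum_shift g.2 (fun d => a (g.1⁻¹ i, d))
  · funext i
    rw [Emid_snd_snd, mval_shift g a]
    show (fun y : Fin p × C2 => a (g.1⁻¹ y.1, g.2⁻¹ * y.2)) (i, 1)
        - (fun y : Fin p × C2 => a (g.1⁻¹ y.1, g.2⁻¹ * y.2)) (i, c1)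
        - C2Sign g.2 * mval p a
      = C2Sign g.2 * ((Emid hp0 (a, t)).2.2 : Fin p → ℚ) (g.1⁻¹ i)
    rw [Emid_snd_snd]
    have := diff_shift g.2 (fun d => a (g.1⁻¹ i, d))
    simp only at this ⊢
    rw [this]
    ring
end
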